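/- arXiv:1707.03090 — 10 statements merged into one kernel-verified Lean document; each statement's English description precedes it below -/
import Mathlib

section
/- Let H be a finite group such that for every subset S ⊆ H the Haar graph H(H,S) is a Cayley graph, and let K be a subgroup of H. Then for every subset S ⊆ K, the Haar graph H(K,S) is a Cayley graph. -/
/-- The Haar graph of a group `H` with connection set `S ⊆ H`: the bipartite
graph on two copies of `H` (indexed by `Bool`; `false` is the copy `H₀`,
`true` is the copy `H₁`) in which `h₀` is adjacent to `(s*h)₁` for `s ∈ S`. -/
def haarGraph {H : Type*} [Group H] (S : Set H) : SimpleGraph (Bool × H) where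
  Adj u v := (u.1 = false ∧ v.1 = true ∧ v.2 * u.2⁻¹ ∈ S) ∨
             (u.1 = true ∧ v.1 = false ∧ u.2 * v.2⁻¹ ∈ S)
  symm := by
    constructor
    rintro ⟨i, x⟩ ⟨j, y⟩ (⟨h1, h2, h3⟩ | ⟨h1, h2, h3⟩)
    · exact Or.inr ⟨h2, h1, h3⟩
    · exact Or.inl ⟨h2, h1, h3⟩
  loopless := by
    constructor
    rintro ⟨i, x⟩ (⟨h1, h2, _⟩ | ⟨h1, h2, _⟩) <;> simp_all

/-- A graph is a Cayley graph if its automorphism group contains a subgroup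
acting regularly on the vertex set. -/
def IsCayleyGraph {V : Type*} (Γ : SimpleGraph V) : Prop :=
  ∃ G : Subgroup (Equiv.Perm V),
    (∀ g ∈ G, ∀ u v : V, Γ.Adj (g u) (g v) ↔ Γ.Adj u v) ∧
    (∀ u v : V, ∃! g : Equiv.Perm V, g ∈ G ∧ g u = v)

/-- A graph is vertex-transitive if its automorphism group acts transitively
on the vertices. -/
def IsVertexTransitive {V : Type*} (Γ : SimpleGraph V) : Prop :=
  ∀ u v : V, ∃ f : Γ ≃g Γ, f u = v

/-- A group is inner abelian if it is non-abelian but every proper subgroup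
is abelian. -/
def IsInnerAbelian (H : Type*) [Group H] : Prop :=
  (¬ ∀ a b : H, a * b = b * a) ∧
    ∀ K : Subgroup H, K ≠ ⊤ → ∀ a b : H, a ∈ K → b ∈ K → a * b = b * a

open Equiv SimpleGraph

lemma haarGraph_adj {H : Type*} [Group H] (S : Set H) (u v : Bool × H) :
    (haarGraph S).Adj u v ↔ ((u.1 = false ∧ v.1 = true ∧ v.2 * u.2⁻¹ ∈ S) ∨
      (u.1 = true ∧ v.1 = false ∧ u.2 * v.2⁻¹ ∈ S)) := Iff.rfl

/-- Transport of the Cayley property along an adjacency-respecting equivalence. -/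
lemma isCayley_of_equiv {V W : Type*} {Γ : SimpleGraph V} {Δ : SimpleGraph W} (e : V ≃ W)
    (he : ∀ u v, Γ.Adj u v ↔ Δ.Adj (e u) (e v)) (h : IsCayleyGraph Δ) :
    IsCayleyGraph Γ := by
  obtain ⟨G, hadj, hreg⟩ := h
  have hc : ∀ g₁ g₂ : Perm W, ((e.trans (g₁ * g₂)).trans e.symm) =
      ((e.trans g₁).trans e.symm) * ((e.trans g₂).trans e.symm) := by
    intro g₁ g₂; ext x; simp [Perm.mul_apply]
  let c : Perm W →* Perm V := MonoidHom.mk' (fun g => (e.trans g).trans e.symm) hc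
  have hcapp : ∀ (g : Perm W) (x : V), c g x = e.symm (g (e x)) := fun _ _ => rfl
  refine ⟨G.map c, ?_, ?_⟩
  · rintro g ⟨g₀, hg₀, rfl⟩ u v
    rw [hcapp, hcapp, he, e.apply_symm_apply, e.apply_symm_apply, hadj g₀ hg₀, ← he]
  · intro u v
    obtain ⟨g, ⟨hgG, hgu⟩, huniq⟩ := hreg (e u) (e v)
    refine ⟨c g, ⟨⟨g, hgG, rfl⟩, by rw [hcapp, hgu, e.symm_apply_apply]⟩, ?_⟩
    rintro h ⟨⟨g₀, hg₀, rfl⟩, hh⟩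
    have : g₀ (e u) = e v := by
      rw [hcapp] at hh
      exact (e.symm_apply_eq.mp hh)
    rw [huniq g₀ ⟨hg₀, this⟩]

/-- Every nonempty finite type carries a regular permutation group. -/
lemma exists_regular (T : Type*) [Finite T] [Nonempty T] :
    ∃ G : Subgroup (Perm T), ∀ u v : T, ∃! g : Perm T, g ∈ G ∧ g u = v := by
  have : Fintype T := Fintype.ofFinite T
  have hpos : 0 < Nat.card T := Nat.card_pos
  haveI : NeZero (Nat.card T) := ⟨hpos.ne'⟩
  obtain ⟨e⟩ : Nonempty (T ≃ ZMod (Nat.card T)) :=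
    ⟨Fintype.equivOfCardEq (by simp [ZMod.card, Nat.card_eq_fintype_card])⟩
  have hm : ∀ a b : Multiplicative (ZMod (Nat.card T)),
      ((e.trans (Equiv.addLeft (Multiplicative.toAdd (a * b)))).trans e.symm) =
      ((e.trans (Equiv.addLeft (Multiplicative.toAdd a))).trans e.symm) *
      ((e.trans (Equiv.addLeft (Multiplicative.toAdd b))).trans e.symm) := by
    intro a b; ext x; simp [Perm.mul_apply, add_assoc]
  let φ : Multiplicative (ZMod (Nat.card T)) →* Perm T :=
    MonoidHom.mk' (fun a => (e.trans (Equiv.addLeft (Multiplicative.toAdd a))).trans e.symm) hm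
  have hφapp : ∀ a (x : T), φ a x = e.symm (Multiplicative.toAdd a + e x) := fun _ _ => rfl
  refine ⟨φ.range, fun u v => ?_⟩
  refine ⟨φ (Multiplicative.ofAdd (e v - e u)), ⟨⟨_, rfl⟩, ?_⟩, ?_⟩
  · rw [hφapp]; simp
  rintro h ⟨⟨a, rfl⟩, hh⟩
  have h1 : Multiplicative.toAdd a + e u = e v := by
    rw [hφapp] at hh
    have := congrArg e hh
    rwa [e.apply_symm_apply] at this
  have h2 : a = Multiplicative.ofAdd (e v - e u) := by
    have h3 : Multiplicative.toAdd a = e v - e u := eq_sub_of_add_eq h1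
    rw [← h3]; rfl
  rw [h2]

/-- Disjoint union of copies of `Γ` indexed by `T`. -/
def unionGraph {V : Type*} (Γ : SimpleGraph V) (T : Type*) : SimpleGraph (V × T) where
  Adj u v := u.2 = v.2 ∧ Γ.Adj u.1 v.1
  symm := by constructor; rintro ⟨u, t⟩ ⟨v, t'⟩ ⟨h1, h2⟩; exact ⟨h1.symm, h2.symm⟩
  loopless := by constructor; rintro ⟨u, t⟩ ⟨-, h⟩; exact Γ.loopless.irrefl u h

lemma unionGraph_adj {V : Type*} (Γ : SimpleGraph V) (T : Type*) (u v : V × T) :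
    (unionGraph Γ T).Adj u v ↔ (u.2 = v.2 ∧ Γ.Adj u.1 v.1) := Iff.rfl

lemma unionGraph_isCayley {V : Type*} {Γ : SimpleGraph V} (T : Type*) [Finite T] [Nonempty T]
    (h : IsCayleyGraph Γ) : IsCayleyGraph (unionGraph Γ T) := by
  obtain ⟨G, hadj, hreg⟩ := h
  obtain ⟨Gt, hregt⟩ := exists_regular T
  have hm : ∀ p q : Perm V × Perm T,
      Equiv.prodCongr (p * q).1 (p * q).2 =
        Equiv.prodCongr p.1 p.2 * Equiv.prodCongr q.1 q.2 := by
    intro p q; ext x <;> rfl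
  let φ : Perm V × Perm T →* Perm (V × T) :=
    MonoidHom.mk' (fun p => Equiv.prodCongr p.1 p.2) hm
  have hφapp : ∀ (p : Perm V × Perm T) (x : V × T), φ p x = (p.1 x.1, p.2 x.2) :=
    fun _ _ => rfl
  refine ⟨(G.prod Gt).map φ, ?_, ?_⟩
  · rintro g ⟨⟨g₀, h₀⟩, ⟨hg₀, hh₀⟩, rfl⟩ u v
    rw [hφapp, hφapp, unionGraph_adj, unionGraph_adj]
    exact and_congr ⟨fun hh => h₀.injective hh, fun hh => by rw [hh]⟩ (hadj g₀ hg₀ u.1 v.1)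
  · rintro ⟨u, t⟩ ⟨v, t'⟩
    obtain ⟨g, ⟨hgG, hgu⟩, huniq⟩ := hreg u v
    obtain ⟨ht, ⟨htG, htu⟩, htuniq⟩ := hregt t t'
    refine ⟨φ (g, ht), ⟨⟨(g, ht), ⟨hgG, htG⟩, rfl⟩, by rw [hφapp]; simp [hgu, htu]⟩, ?_⟩
    rintro f ⟨⟨⟨g₀, h₀⟩, ⟨hg₀, hh₀⟩, rfl⟩, hf⟩
    rw [hφapp] at hf
    have h1 : g₀ u = v := congrArg Prod.fst hf
    have h2 : h₀ t = t' := congrArg Prod.snd hf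
    rw [huniq g₀ ⟨hg₀, h1⟩, htuniq h₀ ⟨hh₀, h2⟩]

/-- The connected component of a vertex in a Cayley graph, as an induced graph, is Cayley. -/
lemma comap_reachSet_isCayley {V : Type*} (Δ : SimpleGraph V) (h : IsCayleyGraph Δ) (v₀ : V) :
    IsCayleyGraph (Δ.comap ((↑) : {v | Δ.Reachable v₀ v} → V)) := by
  classical
  obtain ⟨G, hadj, hreg⟩ := h
  set C : Set V := {v | Δ.Reachable v₀ v} with hC
  -- automorphisms in G preserve reachability
  have hre : ∀ g ∈ G, ∀ a b : V, Δ.Reachable a b ↔ Δ.Reachable (g a) (g b) := by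
    have fwd : ∀ g ∈ G, ∀ a b : V, Δ.Reachable a b → Δ.Reachable (g a) (g b) := by
      intro g hg a b hab
      exact hab.map ⟨g, fun {x y} hxy => (hadj g hg x y).mpr hxy⟩
    intro g hg a b
    refine ⟨fwd g hg a b, fun hab => ?_⟩
    have := fwd g⁻¹ (inv_mem hg) _ _ hab
    simpa using this
  -- if g maps a point of C into C, it permutes C
  have hstab : ∀ g ∈ G, ∀ u : V, u ∈ C → g u ∈ C → ∀ x, x ∈ C ↔ g x ∈ C := by
    intro g hg u hu hgu x
    have h1 : ∀ y, y ∈ C ↔ Δ.Reachable u y := fun y =>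
      ⟨fun hy => hu.symm.trans hy, fun hy => hu.trans hy⟩
    have h2 : ∀ y, y ∈ C ↔ Δ.Reachable (g u) y := fun y =>
      ⟨fun hy => hgu.symm.trans hy, fun hy => hgu.trans hy⟩
    rw [h1 x, h2 (g x), ← hre g hg]
  let P : Perm ↥C → Prop := fun σ => ∃ g : Perm V, g ∈ G ∧ (∀ x, x ∈ C ↔ g x ∈ C) ∧
      ∀ x : ↥C, (σ x : V) = g ↑x
  have one_mem : P 1 := ⟨1, one_mem G, by simp, by simp⟩
  have mul_mem : ∀ {σ τ}, P σ → P τ → P (σ * τ) := by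
    rintro σ τ ⟨g, hg, hgC, hgv⟩ ⟨g', hg', hgC', hgv'⟩
    refine ⟨g * g', mul_mem hg hg', fun x => (hgC' x).trans (hgC (g' x)), fun x => ?_⟩
    have : ((τ x : ↥C) : V) = g' ↑x := hgv' x
    simp [Perm.mul_apply, hgv (τ x), this]
  have inv_mem : ∀ {σ}, P σ → P σ⁻¹ := by
    rintro σ ⟨g, hg, hgC, hgv⟩
    refine ⟨g⁻¹, inv_mem hg, fun x => ?_, fun x => ?_⟩
    · constructor
      · intro hx
        have := (hgC (g⁻¹ x)).symm
        simpa using this.mp (by simpa using hx)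
      · intro hx
        have := (hgC (g⁻¹ x)).mp hx
        simpa using this
    · have hss : σ (σ⁻¹ x) = x := σ.apply_symm_apply x
      have h1 : ((σ (σ⁻¹ x) : ↥C) : V) = g ↑(σ⁻¹ x) := hgv (σ⁻¹ x)
      rw [hss] at h1
      rw [h1]
      simp
  let Gsub : Subgroup (Perm ↥C) :=
    { carrier := setOf P
      one_mem' := one_mem
      mul_mem' := fun ha hb => mul_mem ha hb
      inv_mem' := fun ha => inv_mem ha }
  have hmem : ∀ σ, σ ∈ Gsub ↔ P σ := fun σ => Iff.rfl
  refine ⟨Gsub, ?_, ?_⟩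
  · rintro σ hσ u v
    obtain ⟨g, hg, hgC, hgv⟩ := (hmem σ).mp hσ
    simp only [SimpleGraph.comap_adj]
    rw [hgv u, hgv v, hadj g hg]
  · rintro ⟨u, hu⟩ ⟨v, hv⟩
    obtain ⟨g, ⟨hgG, hgu⟩, huniq⟩ := hreg u v
    have hgC : ∀ x, x ∈ C ↔ g x ∈ C := hstab g hgG u hu (hgu ▸ hv)
    refine ⟨g.subtypePerm (fun x => (hgC x).symm), ⟨(hmem _).mpr ⟨g, hgG, hgC, fun x => rfl⟩, Subtype.ext hgu⟩, ?_⟩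
    rintro τ ⟨hτG, hτ⟩
    obtain ⟨g', hg', hgC', hgv'⟩ := (hmem τ).mp hτG
    have h1 : g' u = v := by
      have := hgv' ⟨u, hu⟩
      rw [hτ] at this
      exact this.symm
    have h2 : g' = g := huniq g' ⟨hg', h1⟩
    ext x
    have := hgv' x
    rw [h2] at this
    exact this

section Haar

variable {G : Type*} [Group G]

lemma haar_adj_mulRight (S : Set G) (k : G) (u v : Bool × G) :
    (haarGraph S).Adj (u.1, u.2 * k) (v.1, v.2 * k) ↔ (haarGraph S).Adj u v := by
  have key : ∀ a b : G, a * k * (b * k)⁻¹ = a * b⁻¹ := by intro a b; group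
  rw [haarGraph_adj, haarGraph_adj]
  simp only [key]

lemma haar_reach_mulRight (S : Set G) (k : G) {u v : Bool × G}
    (h : (haarGraph S).Reachable u v) :
    (haarGraph S).Reachable (u.1, u.2 * k) (v.1, v.2 * k) :=
  h.map ⟨fun p => (p.1, p.2 * k), fun {a b} hab => (haar_adj_mulRight S k a b).mpr hab⟩

variable {K : Subgroup G} {S : Set ↥K}

/-- coercion of vertices from the Haar graph over `K` to the Haar graph over `G`. -/
private def Fc : Bool × ↥K → Bool × G := fun p => (p.1, ↑p.2)

lemma Fc_injective : Function.Injective (Fc (G := G) (K := K)) := by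
  rintro ⟨b, x⟩ ⟨b', x'⟩ h
  obtain ⟨h1, h2⟩ := Prod.mk.injEq .. ▸ h
  exact Prod.ext h1 (Subtype.coe_injective h2)

lemma haar_adj_coe (u v : Bool × ↥K) :
    (haarGraph S).Adj u v ↔ (haarGraph ((↑) '' S : Set G)).Adj (Fc u) (Fc v) := by
  have hmem : ∀ a : ↥K, ((a : G) ∈ ((↑) '' S : Set G)) ↔ a ∈ S := by
    intro a
    constructor
    · rintro ⟨s, hs, he⟩
      rwa [← Subtype.coe_injective he]
    · intro hs; exact ⟨a, hs, rfl⟩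
  have hco : ∀ a b : ↥K, ((a : G) * (b : G)⁻¹) = ((a * b⁻¹ : ↥K) : G) := by
    intro a b; push_cast; ring_nf
  rw [haarGraph_adj, haarGraph_adj]
  simp only [Fc, hco, hmem]

lemma haar_adj_step {u : Bool × ↥K} {w : Bool × G}
    (h : (haarGraph ((↑) '' S : Set G)).Adj (Fc u) w) :
    ∃ u' : Bool × ↥K, w = Fc u' ∧ (haarGraph S).Adj u u' := by
  rcases h with ⟨h1, h2, h3⟩ | ⟨h1, h2, h3⟩
  · obtain ⟨s, hs, hse⟩ := h3
    refine ⟨(true, s * u.2), ?_, Or.inl ⟨h1, rfl, ?_⟩⟩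
    · have hw2 : w.2 = ((s * u.2 : ↥K) : G) := by
        push_cast
        rw [hse]
        simp [Fc, mul_assoc]
      exact Prod.ext h2 hw2
    · show (true, s * u.2).2 * u.2⁻¹ ∈ S
      simpa using hs
  · obtain ⟨s, hs, hse⟩ := h3
    refine ⟨(false, s⁻¹ * u.2), ?_, Or.inr ⟨h1, rfl, ?_⟩⟩
    · have hw2 : w.2 = ((s⁻¹ * u.2 : ↥K) : G) := by
        push_cast
        have : (s : G) * w.2 = (u.2 : G) := by
          rw [hse, Fc]; group
        rw [← this]; group
      exact Prod.ext h2 hw2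
    · show u.2 * ((false, s⁻¹ * u.2).2)⁻¹ ∈ S
      have : u.2 * (s⁻¹ * u.2)⁻¹ = s := by group
      simpa [this] using hs

lemma haar_walk_back {a b : Bool × G}
    (w : (haarGraph ((↑) '' S : Set G)).Walk a b) :
    ∀ u : Bool × ↥K, a = Fc u → ∃ v : Bool × ↥K, b = Fc v ∧ (haarGraph S).Reachable u v := by
  induction w with
  | nil => exact fun u hu => ⟨u, hu, SimpleGraph.Reachable.refl u⟩
  | cons h p ih =>
    intro u hu
    rw [hu] at h
    obtain ⟨u', hc, hadj⟩ := haar_adj_step h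
    obtain ⟨v, hb, hr⟩ := ih u' hc
    exact ⟨v, hb, (hadj.reachable).trans hr⟩

end Haar

theorem haar_cayley_closed_under_subgroups
    {H : Type*} [Group H] [Finite H]
    (hCay : ∀ S : Set H, IsCayleyGraph (haarGraph S))
    (K : Subgroup H) :
    ∀ S : Set K, IsCayleyGraph (haarGraph S) := by
  intro S
  classical
  rcases Set.eq_empty_or_nonempty S with rfl | ⟨s₀, hs₀⟩
  · obtain ⟨Gr, hreg⟩ := exists_regular (Bool × ↥K)
    refine ⟨Gr, fun g _ u v => by simp [haarGraph_adj], hreg⟩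
  set Γ : SimpleGraph (Bool × ↥K) := haarGraph S with hΓ
  set Δ : SimpleGraph (Bool × H) := haarGraph ((↑) '' S : Set H) with hΔ
  have hΔCay : IsCayleyGraph Δ := hCay _
  set C_H : Set (Bool × H) := {v | Δ.Reachable (false, (1 : H)) v} with hCH
  have hCHCay : IsCayleyGraph (Δ.comap ((↑) : C_H → Bool × H)) :=
    comap_reachSet_isCayley Δ hΔCay (false, (1 : H))
  set C_K : Set (Bool × ↥K) := {v | Γ.Reachable (false, (1 : ↥K)) v} with hCK
  have hF1 : Fc ((false, (1 : ↥K)) : Bool × ↥K) = ((false, (1 : H)) : Bool × H) := by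
    simp [Fc]
  have hfwd : ∀ {u v : Bool × ↥K}, Γ.Reachable u v → Δ.Reachable (Fc u) (Fc v) := by
    intro u v h
    exact h.map ⟨Fc, fun {a b} hab => (haar_adj_coe a b).mp hab⟩
  -- the equivalence between the two components
  have hmap : ∀ x : ↥C_K, Fc (x : Bool × ↥K) ∈ C_H := by
    rintro ⟨x, hx⟩
    have := hfwd hx
    rwa [hF1] at this
  have hbij : Function.Bijective (fun x : ↥C_K => (⟨Fc (x : Bool × ↥K), hmap x⟩ : ↥C_H)) := by
    constructor
    · intro x y hxy
      exact Subtype.ext (Fc_injective (congrArg Subtype.val hxy))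
    · rintro ⟨y, hy⟩
      obtain ⟨w⟩ := hy
      obtain ⟨v, hb, hr⟩ := haar_walk_back w (false, (1 : ↥K)) hF1.symm
      exact ⟨⟨v, hr⟩, Subtype.ext hb.symm⟩
  set e : ↥C_K ≃ ↥C_H := Equiv.ofBijective _ hbij with he
  have hΓCCay : IsCayleyGraph (Γ.comap ((↑) : C_K → Bool × ↥K)) := by
    refine isCayley_of_equiv e (fun u v => ?_) hCHCay
    rw [SimpleGraph.comap_adj, SimpleGraph.comap_adj]
    exact haar_adj_coe (u : Bool × ↥K) (v : Bool × ↥K)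
  -- decompose Γ into components, all translates of C_K
  set T := Γ.ConnectedComponent with hT
  have hrep : ∀ t : T, ∃ k : ↥K, Γ.connectedComponentMk (false, k) = t := by
    intro t
    induction t using SimpleGraph.ConnectedComponent.ind with
    | _ v =>
      obtain ⟨b, y⟩ := v
      cases b
      · exact ⟨y, rfl⟩
      · refine ⟨s₀⁻¹ * y, SimpleGraph.ConnectedComponent.connectedComponentMk_eq_of_adj ?_⟩
        refine Or.inl ⟨rfl, rfl, ?_⟩
        show y * ((false, s₀⁻¹ * y).2)⁻¹ ∈ S
        have hyy : y * (s₀⁻¹ * y)⁻¹ = s₀ := by group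
        simpa [hyy] using hs₀
  choose rep hrepk using hrep
  set ψ : ↥C_K × T → Bool × ↥K :=
    fun p => ((p.1 : Bool × ↥K).1, (p.1 : Bool × ↥K).2 * rep p.2) with hψ
  have hcomp : ∀ (x : ↥C_K) (t : T), Γ.connectedComponentMk (ψ (x, t)) = t := by
    rintro ⟨x, hx⟩ t
    have h1 : Γ.Reachable (false, 1 * rep t) (x.1, x.2 * rep t) := haar_reach_mulRight S (rep t) hx
    rw [one_mul] at h1
    have h2 : Γ.connectedComponentMk (x.1, x.2 * rep t) = Γ.connectedComponentMk (false, rep t) :=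
      SimpleGraph.ConnectedComponent.sound h1.symm
    simp only [hψ]
    exact h2.trans (hrepk t)
  have hbijψ : Function.Bijective ψ := by
    constructor
    · rintro ⟨x, t⟩ ⟨x', t'⟩ hxy
      have ht : t = t' := by rw [← hcomp x t, ← hcomp x' t', hxy]
      subst ht
      simp only [hψ] at hxy
      obtain ⟨h1, h2⟩ := Prod.mk.inj hxy
      exact Prod.ext (Subtype.ext (Prod.ext h1 (mul_right_cancel h2))) rfl
    · rintro ⟨b, y⟩
      set t := Γ.connectedComponentMk (b, y) with htdef
      have hr : Γ.Reachable (false, rep t) (b, y) :=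
        SimpleGraph.ConnectedComponent.exact (hrepk t)
      have hr2 : Γ.Reachable (false, rep t * (rep t)⁻¹) (b, y * (rep t)⁻¹) :=
        haar_reach_mulRight S (rep t)⁻¹ hr
      rw [mul_inv_cancel] at hr2
      refine ⟨(⟨(b, y * (rep t)⁻¹), hr2⟩, t), ?_⟩
      show (b, y * (rep t)⁻¹ * rep t) = (b, y)
      rw [inv_mul_cancel_right]
  have hadjψ : ∀ p q : ↥C_K × T,
      Γ.Adj (ψ p) (ψ q) ↔ (unionGraph (Γ.comap ((↑) : C_K → Bool × ↥K)) T).Adj p q := by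
    rintro ⟨x, t⟩ ⟨x', t'⟩
    simp only [hψ]
    rw [unionGraph_adj]
    constructor
    · intro h
      have ht : t = t' := by
        rw [← hcomp x t, ← hcomp x' t']
        exact SimpleGraph.ConnectedComponent.connectedComponentMk_eq_of_adj h
      subst ht
      refine ⟨rfl, ?_⟩
      rw [SimpleGraph.comap_adj]
      exact (haar_adj_mulRight S (rep t) _ _).mp h
    · rintro ⟨ht, hadj⟩
      obtain rfl : t = t' := ht
      rw [SimpleGraph.comap_adj] at hadj
      exact (haar_adj_mulRight S (rep t) _ _).mpr hadj
  have hNe : Nonempty T := ⟨Γ.connectedComponentMk (false, 1)⟩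
  have hUD : IsCayleyGraph (unionGraph (Γ.comap ((↑) : C_K → Bool × ↥K)) T) :=
    unionGraph_isCayley T hΓCCay
  set eψ : (↥C_K × T) ≃ (Bool × ↥K) := Equiv.ofBijective ψ hbijψ with heψ
  refine isCayley_of_equiv eψ.symm (fun u v => ?_) hUD
  have h1 : ψ (eψ.symm u) = u := eψ.apply_symm_apply u
  have h2 : ψ (eψ.symm v) = v := eψ.apply_symm_apply v
  rw [← hadjψ (eψ.symm u) (eψ.symm v), h1, h2]
end

section
/- Let H be a finite group, N ⊴ H a normal subgroup, and S̄ ⊆ H/N a subset such that (i) the Haar graph H(H/N, S̄) is not vertex-transitive, and (ii) S̄ ≠ S̄x and S̄ ≠ xS̄ for every non-identity element x ∈ H/N. Then there exists a subset S ⊆ H (namely S = ⋃_{aN ∈ S̄} aN) such that the Haar graph H(H,S) is not a Cayley graph. -/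
namespace HaarAux

variable {H : Type*} [Group H] (N : Subgroup H) [N.Normal]

/-- projection to the quotient on the second factor -/
def pr : Bool × H → Bool × (H ⧸ N) := fun p => (p.1, (p.2 : H ⧸ N))

variable (Sbar : Set (H ⧸ N))

lemma adj_iff (u v : Bool × H) :
    (haarGraph ((QuotientGroup.mk : H → H ⧸ N) ⁻¹' Sbar)).Adj u v ↔
      (haarGraph Sbar).Adj (pr N u) (pr N v) := by
  simp [haarGraph, pr, Set.mem_preimage]

lemma subsingleton_vt {K : Type*} [Group K] [Subsingleton K] (S : Set K) :
    IsVertexTransitive (haarGraph S) := by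
  intro u v
  have hmem : ∀ x y : K, (x * y⁻¹ ∈ S) ↔ (y * x⁻¹ ∈ S) := by
    intro x y; rw [Subsingleton.elim (x * y⁻¹) (y * x⁻¹)]
  have h2 : u.2 = v.2 := Subsingleton.elim _ _
  set b := xor u.1 v.1 with hb
  refine ⟨⟨⟨fun p => (xor b p.1, p.2), fun p => (xor b p.1, p.2), ?_, ?_⟩, ?_⟩, ?_⟩
  · intro p; cases hp : p.1 <;> cases b <;> simp [hp] <;> (rw [← hp]) <;> exact Prod.mk.eta
  · intro p; cases hp : p.1 <;> cases b <;> simp [hp] <;> (rw [← hp]) <;> exact Prod.mk.eta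
  · intro p q
    cases b <;> simp [haarGraph, hmem p.2 q.2] <;> tauto
  · have : xor b u.1 = v.1 := by cases hu : u.1 <;> cases hv : v.1 <;> simp [hb, hu, hv]
    exact Prod.ext_iff.mpr ⟨this, h2⟩

variable {N Sbar}

/-- equal projections give equal neighbourhoods -/
lemma nbhd_of_pr_eq {u v : Bool × H} (h : pr N u = pr N v) (w : Bool × H) :
    (haarGraph ((QuotientGroup.mk : H → H ⧸ N) ⁻¹' Sbar)).Adj u w ↔
      (haarGraph ((QuotientGroup.mk : H → H ⧸ N) ⁻¹' Sbar)).Adj v w := by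
  rw [adj_iff, adj_iff, h]

/-- equal neighbourhoods give equal projections -/
lemma pr_eq_of_nbhd (hne : Sbar.Nonempty)
    (h2 : ∀ x : H ⧸ N, x ≠ 1 →
      Sbar ≠ (fun s => s * x) '' Sbar ∧ Sbar ≠ (fun s => x * s) '' Sbar)
    {u v : Bool × H}
    (h : ∀ w, (haarGraph ((QuotientGroup.mk : H → H ⧸ N) ⁻¹' Sbar)).Adj u w ↔
      (haarGraph ((QuotientGroup.mk : H → H ⧸ N) ⁻¹' Sbar)).Adj v w) :
    pr N u = pr N v := by
  obtain ⟨b₁, a⟩ := u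
  obtain ⟨b₂, c⟩ := v
  obtain ⟨s, hs⟩ := hne
  cases b₁ <;> cases b₂
  · -- false, false : right translation
    suffices hq : ((a : H ⧸ N)) = (c : H ⧸ N) by simpa [pr] using hq
    by_contra hne'
    have hx : ((c : H ⧸ N)) * (a : H ⧸ N)⁻¹ ≠ 1 := by
      intro hx1; exact hne' (mul_inv_eq_one.mp hx1).symm
    refine (h2 _ hx).1 ?_
    -- key pointwise fact
    have key : ∀ t : H ⧸ N, t ∈ Sbar ↔ t * ((a : H ⧸ N) * (c : H ⧸ N)⁻¹) ∈ Sbar := by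
      intro t
      obtain ⟨z, hz⟩ := QuotientGroup.mk_surjective (t * (a : H ⧸ N))
      have := h (true, z)
      have h1' : ((z * a⁻¹ : H) : H ⧸ N) = t := by
        rw [QuotientGroup.mk_mul, QuotientGroup.mk_inv, hz]; group
      have h2' : ((z * c⁻¹ : H) : H ⧸ N) = t * ((a : H ⧸ N) * (c : H ⧸ N)⁻¹) := by
        rw [QuotientGroup.mk_mul, QuotientGroup.mk_inv, hz]; group
      constructor
      · intro ht
        have := (this.mp (Or.inl ⟨rfl, rfl, by
          show ((z * a⁻¹ : H) : H ⧸ N) ∈ Sbar; rw [h1']; exact ht⟩))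
        rcases this with ⟨_, _, hmem⟩ | ⟨hc, _, _⟩
        · have hmem' : ((z * c⁻¹ : H) : H ⧸ N) ∈ Sbar := hmem
          rwa [h2'] at hmem'
        · exact absurd hc (by simp)
      · intro ht
        have := (this.mpr (Or.inl ⟨rfl, rfl, by
          show ((z * c⁻¹ : H) : H ⧸ N) ∈ Sbar; rw [h2']; exact ht⟩))
        rcases this with ⟨_, _, hmem⟩ | ⟨hc, _, _⟩
        · have hmem' : ((z * a⁻¹ : H) : H ⧸ N) ∈ Sbar := hmem
          rwa [h1'] at hmem'
        · exact absurd hc (by simp)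
    ext t
    simp only [Set.mem_image]
    constructor
    · intro ht
      exact ⟨t * ((c : H ⧸ N) * (a : H ⧸ N)⁻¹)⁻¹, by
        rw [show t * ((c:H⧸N)*(a:H⧸N)⁻¹)⁻¹ = t * ((a:H⧸N)*(c:H⧸N)⁻¹) by group]
        exact (key t).mp ht, by group⟩
    · rintro ⟨r, hr, rfl⟩
      have := (key (r * ((c:H⧸N)*(a:H⧸N)⁻¹))).mpr (by
        rw [show r * ((c:H⧸N)*(a:H⧸N)⁻¹) * ((a:H⧸N)*(c:H⧸N)⁻¹) = r by group]
        exact hr)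
      exact this
  · -- false, true : contradiction using nonempty
    exfalso
    obtain ⟨z, hz⟩ := QuotientGroup.mk_surjective (s * (a : H ⧸ N))
    have := (h (true, z)).mp (Or.inl ⟨rfl, rfl, by
      show ((z * a⁻¹ : H) : H ⧸ N) ∈ Sbar
      rw [QuotientGroup.mk_mul, QuotientGroup.mk_inv, hz,
        show s * (a:H⧸N) * (a:H⧸N)⁻¹ = s by group]; exact hs⟩)
    rcases this with ⟨hc, _, _⟩ | ⟨_, hc, _⟩ <;> simp at hc
  · -- true, false
    exfalso
    obtain ⟨z, hz⟩ := QuotientGroup.mk_surjective (s * (c : H ⧸ N))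
    have := (h (true, z)).mpr (Or.inl ⟨rfl, rfl, by
      show ((z * c⁻¹ : H) : H ⧸ N) ∈ Sbar
      rw [QuotientGroup.mk_mul, QuotientGroup.mk_inv, hz,
        show s * (c:H⧸N) * (c:H⧸N)⁻¹ = s by group]; exact hs⟩)
    rcases this with ⟨hc, _, _⟩ | ⟨_, hc, _⟩ <;> simp at hc
  · -- true, true : left translation
    suffices hq : ((a : H ⧸ N)) = (c : H ⧸ N) by simpa [pr] using hq
    by_contra hne'
    have hx : ((a : H ⧸ N)) * (c : H ⧸ N)⁻¹ ≠ 1 := by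
      intro hx1; exact hne' (mul_inv_eq_one.mp hx1)
    refine (h2 _ hx).2 ?_
    have key : ∀ t : H ⧸ N, t ∈ Sbar ↔ ((c : H ⧸ N) * (a : H ⧸ N)⁻¹) * t ∈ Sbar := by
      intro t
      obtain ⟨z, hz⟩ := QuotientGroup.mk_surjective (t⁻¹ * (a : H ⧸ N))
      have := h (false, z)
      have h1' : ((a * z⁻¹ : H) : H ⧸ N) = t := by
        rw [QuotientGroup.mk_mul, QuotientGroup.mk_inv, hz]; group
      have h2' : ((c * z⁻¹ : H) : H ⧸ N) = ((c : H ⧸ N) * (a : H ⧸ N)⁻¹) * t := by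
        rw [QuotientGroup.mk_mul, QuotientGroup.mk_inv, hz]; group
      constructor
      · intro ht
        have := (this.mp (Or.inr ⟨rfl, rfl, by
          show ((a * z⁻¹ : H) : H ⧸ N) ∈ Sbar; rw [h1']; exact ht⟩))
        rcases this with ⟨hc, _, _⟩ | ⟨_, _, hmem⟩
        · exact absurd hc (by simp)
        · have hmem' : ((c * z⁻¹ : H) : H ⧸ N) ∈ Sbar := hmem
          rwa [h2'] at hmem'
      · intro ht
        have := (this.mpr (Or.inr ⟨rfl, rfl, by
          show ((c * z⁻¹ : H) : H ⧸ N) ∈ Sbar; rw [h2']; exact ht⟩))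
        rcases this with ⟨hc, _, _⟩ | ⟨_, _, hmem⟩
        · exact absurd hc (by simp)
        · have hmem' : ((a * z⁻¹ : H) : H ⧸ N) ∈ Sbar := hmem
          rwa [h1'] at hmem'
    ext t
    simp only [Set.mem_image]
    constructor
    · intro ht
      refine ⟨((a:H⧸N)*(c:H⧸N)⁻¹)⁻¹ * t, ?_, by group⟩
      rw [show ((a:H⧸N)*(c:H⧸N)⁻¹)⁻¹ * t = ((c:H⧸N)*(a:H⧸N)⁻¹) * t by group]
      exact (key t).mp ht
    · rintro ⟨r, hr, rfl⟩
      have := (key (((a:H⧸N)*(c:H⧸N)⁻¹) * r)).mpr (by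
        rw [show ((c:H⧸N)*(a:H⧸N)⁻¹) * (((a:H⧸N)*(c:H⧸N)⁻¹) * r) = r by group]
        exact hr)
      exact this

end HaarAux

theorem quotient_criterion_non_cayley_haar
    {H : Type*} [Group H] [Finite H] (N : Subgroup H) [N.Normal]
    (Sbar : Set (H ⧸ N))
    (h1 : ¬ IsVertexTransitive (haarGraph Sbar))
    (h2 : ∀ x : H ⧸ N, x ≠ 1 →
      Sbar ≠ (fun s => s * x) '' Sbar ∧ Sbar ≠ (fun s => x * s) '' Sbar) :
    ∃ S : Set H, S = (QuotientGroup.mk : H → H ⧸ N) ⁻¹' Sbar ∧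
      ¬ IsCayleyGraph (haarGraph S) := by
  classical
  refine ⟨_, rfl, ?_⟩
  rintro ⟨G, hGadj, hGreg⟩
  apply h1
  rcases subsingleton_or_nontrivial (H ⧸ N) with hsub | hnt
  · exact HaarAux.subsingleton_vt Sbar
  -- Sbar is nonempty
  have hne : Sbar.Nonempty := by
    rw [Set.nonempty_iff_ne_empty]
    intro hSe
    obtain ⟨x, hx⟩ := exists_ne (1 : H ⧸ N)
    exact (h2 x hx).1 (by rw [hSe]; simp)
  set S : Set H := (QuotientGroup.mk : H → H ⧸ N) ⁻¹' Sbar with hS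
  -- key: any adjacency-preserving permutation descends
  have keyg : ∀ g : Equiv.Perm (Bool × H),
      (∀ u v, (haarGraph S).Adj (g u) (g v) ↔ (haarGraph S).Adj u v) →
      ∀ a b : Bool × H, HaarAux.pr N a = HaarAux.pr N b →
        HaarAux.pr N (g a) = HaarAux.pr N (g b) := by
    intro g hg a b hab
    apply HaarAux.pr_eq_of_nbhd hne h2
    intro w
    have hw : w = g (g.symm w) := (g.apply_symm_apply w).symm
    rw [hw, hg, hg]
    exact HaarAux.nbhd_of_pr_eq hab _
  intro u v
  -- lifts
  set u' : Bool × H := (u.1, u.2.out) with hu'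
  set v' : Bool × H := (v.1, v.2.out) with hv'
  have hpru : HaarAux.pr N u' = u := by
    simp [HaarAux.pr, hu', QuotientGroup.out_eq']
  have hprv : HaarAux.pr N v' = v := by
    simp [HaarAux.pr, hv', QuotientGroup.out_eq']
  obtain ⟨g, ⟨hgG, hguv⟩, -⟩ := hGreg u' v'
  have hg : ∀ a b, (haarGraph S).Adj (g a) (g b) ↔ (haarGraph S).Adj a b :=
    hGadj g hgG
  have hgsymm : ∀ a b, (haarGraph S).Adj (g.symm a) (g.symm b) ↔ (haarGraph S).Adj a b := by
    intro a b
    conv_rhs => rw [← g.apply_symm_apply a, ← g.apply_symm_apply b]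
    rw [hg]
  -- the descended maps
  set F : Bool × (H ⧸ N) → Bool × (H ⧸ N) :=
    fun p => HaarAux.pr N (g (p.1, p.2.out)) with hF
  set Finv : Bool × (H ⧸ N) → Bool × (H ⧸ N) :=
    fun p => HaarAux.pr N (g.symm (p.1, p.2.out)) with hFinv
  have hlift : ∀ p : Bool × (H ⧸ N), HaarAux.pr N (p.1, p.2.out) = p := by
    intro p; simp [HaarAux.pr, QuotientGroup.out_eq']
  have hleft : ∀ p, Finv (F p) = p := by
    intro p
    have h1' : HaarAux.pr N ((F p).1, (F p).2.out) = HaarAux.pr N (g (p.1, p.2.out)) := by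
      rw [hlift]
    have := keyg g.symm hgsymm _ _ h1'
    simpa [Finv, Equiv.symm_apply_apply, hlift] using this
  have hright : ∀ p, F (Finv p) = p := by
    intro p
    have h1' : HaarAux.pr N ((Finv p).1, (Finv p).2.out) = HaarAux.pr N (g.symm (p.1, p.2.out)) := by
      rw [hlift]
    have := keyg g hg _ _ h1'
    simpa [F, Equiv.apply_symm_apply, hlift] using this
  refine ⟨⟨⟨F, Finv, hleft, hright⟩, ?_⟩, ?_⟩
  · intro p q
    show (haarGraph Sbar).Adj (F p) (F q) ↔ (haarGraph Sbar).Adj p q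
    rw [hF]
    rw [← HaarAux.adj_iff (N := N) Sbar, hg, HaarAux.adj_iff (N := N) Sbar, hlift, hlift]
  · show F u = v
    rw [hF]
    simp only [← hu']
    rw [hguv, hprv]
end

section
/- Let H be a finite group with a series of subgroups 1 = H_0 ⊴ H_1 ⊴ ⋯ ⊴ H_{n-1} ⊴ H_n = H (each H_i normal in H_{i+1}). Suppose that for some i ∈ {0,…,n−1} there exists a subset R ⊆ H_{i+1}/H_i such that (i) the Haar graph H(H_{i+1}/H_i, R) is not vertex-transitive, and (ii) R ≠ Rx and R ≠ xR for every non-identity element x ∈ H_{i+1}/H_i. Then there exists a subset S ⊆ H such that the Haar graph H(H,S) is not a Cayley graph. -/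
set_option linter.unusedSectionVars false
set_option maxHeartbeats 1000000


section Swap
variable {V W : Type*} (X : SimpleGraph V) (Y : SimpleGraph W)

private lemma walk_pull (ρ : V → W)
    (hadj : ∀ x y, X.Adj x y ↔ Y.Adj (ρ x) (ρ y))
    (hlift : ∀ (x : V) (z : W), Y.Adj (ρ x) z → ∃ y, ρ y = z) :
    ∀ {w z : W} (_ : Y.Walk w z) (x : V), ρ x = w → ∃ y, ρ y = z ∧ X.Reachable x y := by
  intro w z p
  induction p with
  | nil => exact fun x hx => ⟨x, hx, SimpleGraph.Reachable.refl x⟩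
  | cons h p ih =>
    intro x hx
    subst hx
    obtain ⟨y, hy⟩ := hlift x _ h
    obtain ⟨y', hy', hr⟩ := ih y hy
    exact ⟨y', hy', ((hadj x y).mpr (hy ▸ h)).reachable.trans hr⟩

private lemma reach_closed {D : Set W}
    (hcl : ∀ ⦃w z : W⦄, Y.Adj w z → w ∈ D → z ∈ D) :
    ∀ ⦃w z : W⦄, Y.Reachable w z → w ∈ D → z ∈ D := by
  intro w z hr
  obtain ⟨p⟩ := hr
  induction p with
  | nil => exact id
  | cons h p ih => exact fun hw => ih (hcl h hw)

lemma swap_iso_exists (ρ : V → W) (gg : W → V) (D : Set W) (σ : Y ≃g Y)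
    (hD : ∀ w ∈ D, ρ (gg w) = w)
    (hgρ : ∀ x, gg (ρ x) = x)
    (hcl : ∀ ⦃w z : W⦄, Y.Adj w z → w ∈ D → z ∈ D)
    (hρD : ∀ x, ρ x ∈ D)
    (hadj : ∀ x y, X.Adj x y ↔ Y.Adj (ρ x) (ρ y))
    (hrch : ∀ x y, Y.Reachable (ρ x) (ρ y) → X.Reachable x y)
    (u v : V) (huv : σ (ρ u) = ρ v) :
    ∃ f : X ≃g X, f u = v := by
  classical
  have hmap : ∀ x y, X.Reachable x y → Y.Reachable (ρ x) (ρ y) := by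
    intro x y h
    exact h.map (⟨ρ, fun {a b} hab => (hadj a b).mp hab⟩ : X →g Y)
  have hσmap : ∀ (σ' : Y ≃g Y) (w z : W), Y.Reachable w z → Y.Reachable (σ' w) (σ' z) := by
    intro σ' w z h
    exact h.map (⟨σ'.toEquiv, fun {a b} hab => σ'.map_rel_iff.mpr hab⟩ : Y →g Y)
  have hDreach := reach_closed Y hcl
  set F : (Y ≃g Y) → V → V → V → V := fun σ' u' v' x =>
    if X.Reachable u' x then gg (σ' (ρ x))
    else if X.Reachable v' x then gg (σ'.symm (ρ x)) else x with hF
  have main : ∀ (σ' : Y ≃g Y) (u' v' : V), σ' (ρ u') = ρ v' →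
      ∀ x, X.Reachable u' x →
        ρ (gg (σ' (ρ x))) = σ' (ρ x) ∧ X.Reachable v' (gg (σ' (ρ x))) := by
    intro σ' u' v' h x hx
    have h1 : Y.Reachable (ρ v') (σ' (ρ x)) := h ▸ hσmap σ' _ _ (hmap _ _ hx)
    have h2 : σ' (ρ x) ∈ D := hDreach h1 (hρD v')
    have h3 : ρ (gg (σ' (ρ x))) = σ' (ρ x) := hD _ h2
    exact ⟨h3, hrch _ _ (by rw [h3]; exact h1)⟩
  have symm_main : ∀ (σ' : Y ≃g Y) (u' v' : V), σ' (ρ u') = ρ v' →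
      σ'.symm (ρ v') = ρ u' := by
    intro σ' u' v' h
    rw [← h]; exact σ'.symm_apply_apply _
  have comp : ∀ (σ' : Y ≃g Y) (u' v' : V) (h : σ' (ρ u') = ρ v') (x : V),
      F σ'.symm v' u' (F σ' u' v' x) = x := by
    intro σ' u' v' h x
    by_cases h1 : X.Reachable u' x
    · obtain ⟨he, hr⟩ := main σ' u' v' h x h1
      simp only [hF, if_pos h1, if_pos hr, he, σ'.symm_apply_apply, hgρ]
    · by_cases h2 : X.Reachable v' x
      · obtain ⟨he, hr⟩ := main σ'.symm v' u' (symm_main σ' u' v' h) x h2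
        have hnr : ¬ X.Reachable v' (gg (σ'.symm (ρ x))) := fun hc =>
          h1 ((hr.trans hc.symm).trans h2)
        simp only [hF, if_neg h1, if_pos h2, if_neg hnr, if_pos hr, he,
          σ'.symm.symm_apply_apply, hgρ]
      · simp only [hF, if_neg h1, if_neg h2]
  have adjstep : ∀ (σ' : Y ≃g Y) (u' v' : V) (h : σ' (ρ u') = ρ v') (x y : V),
      X.Adj x y → X.Adj (F σ' u' v' x) (F σ' u' v' y) := by
    intro σ' u' v' h x y hxy
    by_cases h1 : X.Reachable u' x
    · have h1y : X.Reachable u' y := h1.trans hxy.reachable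
      obtain ⟨hex, _⟩ := main σ' u' v' h x h1
      obtain ⟨hey, _⟩ := main σ' u' v' h y h1y
      simp only [hF, if_pos h1, if_pos h1y]
      rw [hadj, hex, hey]
      exact σ'.map_rel_iff.mpr ((hadj x y).mp hxy)
    · have h1y : ¬ X.Reachable u' y := fun hc => h1 (hc.trans hxy.reachable.symm)
      by_cases h2 : X.Reachable v' x
      · have h2y : X.Reachable v' y := h2.trans hxy.reachable
        obtain ⟨hex, _⟩ := main σ'.symm v' u' (symm_main σ' u' v' h) x h2
        obtain ⟨hey, _⟩ := main σ'.symm v' u' (symm_main σ' u' v' h) y h2y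
        simp only [hF, if_neg h1, if_neg h1y, if_pos h2, if_pos h2y]
        rw [hadj, hex, hey]
        exact σ'.symm.map_rel_iff.mpr ((hadj x y).mp hxy)
      · have h2y : ¬ X.Reachable v' y := fun hc => h2 (hc.trans hxy.reachable.symm)
        simpa only [hF, if_neg h1, if_neg h1y, if_neg h2, if_neg h2y] using hxy
  have hsymm : σ.symm.symm = σ := by ext w; rfl
  refine ⟨⟨⟨F σ u v, F σ.symm v u, fun x => comp σ u v huv x, fun x => ?_⟩, ?_⟩, ?_⟩
  · have := comp σ.symm v u (symm_main σ u v huv) x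
    rwa [hsymm] at this
  · intro x y
    constructor
    · intro hxy
      simp only [Equiv.coe_fn_mk] at hxy
      have := adjstep σ.symm v u (symm_main σ u v huv) _ _ hxy
      rwa [comp σ u v huv x, comp σ u v huv y] at this
    · intro hxy
      simpa only [Equiv.coe_fn_mk] using adjstep σ u v huv x y hxy
  · simp only [hF]
    show F σ u v u = v
    simp only [hF, if_pos (SimpleGraph.Reachable.refl u), huv, hgρ]
end Swap

section Bar
variable {H : Type*} [Group H] (N : Subgroup H)

abbrev Tq := Quotient (QuotientGroup.rightRel N)

def tmk (a : H) : Tq N := Quotient.mk (QuotientGroup.rightRel N) a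

lemma tmk_eq {a b : H} : tmk N a = tmk N b ↔ b * a⁻¹ ∈ N :=
  ⟨fun h => QuotientGroup.rightRel_apply.mp (Quotient.exact h),
   fun h => Quotient.sound (QuotientGroup.rightRel_apply.mpr h)⟩

def barGraph (S : Set H) : SimpleGraph (Bool × Tq N) where
  Adj u v := (u.1 = false ∧ v.1 = true ∧ ∃ a b : H, u.2 = tmk N a ∧ v.2 = tmk N b ∧ b * a⁻¹ ∈ S) ∨
             (u.1 = true ∧ v.1 = false ∧ ∃ a b : H, v.2 = tmk N a ∧ u.2 = tmk N b ∧ b * a⁻¹ ∈ S)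
  symm := by
    constructor
    rintro ⟨i, x⟩ ⟨j, y⟩ (⟨h1, h2, h3⟩ | ⟨h1, h2, h3⟩)
    · exact Or.inr ⟨h2, h1, h3⟩
    · exact Or.inl ⟨h2, h1, h3⟩
  loopless := by
    constructor
    rintro ⟨i, x⟩ (⟨h1, h2, _⟩ | ⟨h1, h2, _⟩) <;> simp_all

lemma barGraph_adj_mk {S : Set H}
    (hSinv : ∀ (x n₁ n₂ : H), n₁ ∈ N → n₂ ∈ N → (n₁ * x * n₂ ∈ S ↔ x ∈ S))
    (b b' : Bool) (a a' : H) :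
    (barGraph N S).Adj (b, tmk N a) (b', tmk N a') ↔ (haarGraph S).Adj (b, a) (b', a') := by
  have key : ∀ c c' : H, (∃ a₁ b₁ : H, tmk N c = tmk N a₁ ∧ tmk N c' = tmk N b₁ ∧ b₁ * a₁⁻¹ ∈ S)
      ↔ c' * c⁻¹ ∈ S := by
    intro c c'
    constructor
    · rintro ⟨a₁, b₁, h₁, h₂, h₃⟩
      rw [tmk_eq] at h₁ h₂
      have h4 : b₁ * a₁⁻¹ = (b₁ * c'⁻¹) * (c' * c⁻¹) * (a₁ * c⁻¹)⁻¹ := by group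
      rw [h4] at h₃
      exact (hSinv (c' * c⁻¹) _ _ h₂ (N.inv_mem h₁)).mp h₃
    · intro h
      exact ⟨c, c', rfl, rfl, h⟩
  constructor
  · rintro (⟨hb, hb', hex⟩ | ⟨hb, hb', hex⟩)
    · exact Or.inl ⟨hb, hb', (key a a').mp hex⟩
    · exact Or.inr ⟨hb, hb', (key a' a).mp hex⟩
  · rintro (⟨hb, hb', h⟩ | ⟨hb, hb', h⟩)
    · exact Or.inl ⟨hb, hb', (key a a').mpr h⟩
    · exact Or.inr ⟨hb, hb', (key a' a).mpr h⟩
end Bar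

section Rho
variable {H : Type*} [Group H] (N K : Subgroup H) (hNK : N ≤ K)
  [hnorm : (N.subgroupOf K).Normal]

local notation "Q" => K ⧸ N.subgroupOf K

def rhoQ : Q → Tq N :=
  Quotient.map' (fun k : K => (k : H)) (by
    intro k k' h
    rw [QuotientGroup.leftRel_apply] at h
    rw [QuotientGroup.rightRel_apply]
    have h2 : k * (k⁻¹ * k') * k⁻¹ ∈ N.subgroupOf K := hnorm.conj_mem _ h k
    have h3 : k * (k⁻¹ * k') * k⁻¹ = k' * k⁻¹ := by group
    rw [h3] at h2
    simpa [Subgroup.mem_subgroupOf] using h2)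

lemma rhoQ_mk (k : K) : rhoQ N K (QuotientGroup.mk k) = tmk N (k : H) := rfl

lemma rhoQ_inj : Function.Injective (rhoQ N K) := by
  intro q q'
  induction q using Quotient.inductionOn' with | h k =>
  induction q' using Quotient.inductionOn' with | h k' =>
  intro h
  have h1 : (k' : H) * (k : H)⁻¹ ∈ N := (tmk_eq N).mp h
  have h2 : ((k' * k⁻¹ : K) : H) ∈ N := by push_cast; exact h1
  have h3 : (k' * k⁻¹ : K) ∈ N.subgroupOf K := by
    simpa [Subgroup.mem_subgroupOf] using h2
  have h4 : k⁻¹ * (k' * k⁻¹) * k ∈ N.subgroupOf K := by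
    simpa using hnorm.conj_mem _ h3 k⁻¹
  have h5 : k⁻¹ * (k' * k⁻¹) * k = k⁻¹ * k' := by group
  rw [h5] at h4
  exact Quotient.sound' (QuotientGroup.leftRel_apply.mpr h4)

open scoped Classical in
noncomputable def ggT : Tq N → Q :=
  Quotient.lift (fun a : H => if h : a ∈ K then (QuotientGroup.mk ⟨a, h⟩ : Q) else 1) (by
    intro a a' h
    have hn : a' * a⁻¹ ∈ N := QuotientGroup.rightRel_apply.mp h
    by_cases hK : a ∈ K
    · have hK' : a' ∈ K := by
        have : a' = (a' * a⁻¹) * a := by group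
        rw [this]; exact K.mul_mem (hNK hn) hK
      rw [dif_pos hK, dif_pos hK']
      refine (QuotientGroup.eq ).mpr ?_
      have hmem : (⟨a' * a⁻¹, hNK hn⟩ : K) ∈ N.subgroupOf K := by
        rw [Subgroup.mem_subgroupOf]; exact hn
      have hc := hnorm.conj_mem _ hmem (⟨a, hK⟩ : K)⁻¹
      have he : (⟨a, hK⟩ : K)⁻¹ * ⟨a' * a⁻¹, hNK hn⟩ * (⟨a, hK⟩ : K)⁻¹⁻¹ =
          (⟨a, hK⟩ : K)⁻¹ * ⟨a', hK'⟩ := by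
        apply Subtype.ext; push_cast; group
      rwa [he] at hc
    · have hK' : a' ∉ K := by
        intro hc
        exact hK (by
          have : a = (a' * a⁻¹)⁻¹ * a' := by group
          rw [this]; exact K.mul_mem (K.inv_mem (hNK hn)) hc)
      rw [dif_neg hK, dif_neg hK'])

lemma ggT_tmk (k : K) : ggT N K hNK (tmk N (k : H)) = QuotientGroup.mk k := by
  simp only [ggT, tmk, Quotient.lift_mk, dif_pos k.2]

def Sset (R : Set Q) : Set H := Subtype.val '' ((QuotientGroup.mk : K → Q) ⁻¹' R)

variable {R : Set (K ⧸ N.subgroupOf K)}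

lemma mem_Sset {h : H} : h ∈ Sset N K R ↔ ∃ k : K, (k : H) = h ∧ (QuotientGroup.mk k : Q) ∈ R := by
  constructor
  · rintro ⟨k, hk, rfl⟩; exact ⟨k, rfl, hk⟩
  · rintro ⟨k, rfl, hk⟩; exact ⟨k, hk, rfl⟩

lemma Sset_subset {x : H} (hx : x ∈ Sset N K R) : x ∈ K := by
  obtain ⟨k, rfl, -⟩ := (mem_Sset N K).mp hx
  exact k.2

include hNK in
lemma Sset_inv : ∀ (x n₁ n₂ : H), n₁ ∈ N → n₂ ∈ N → (n₁ * x * n₂ ∈ Sset N K R ↔ x ∈ Sset N K R) := by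
  have key : ∀ x ∈ Sset N K R, ∀ n₁ ∈ N, ∀ n₂ ∈ N, n₁ * x * n₂ ∈ Sset N K R := by
    intro x hx n₁ hn₁ n₂ hn₂
    obtain ⟨k, rfl, hk⟩ := (mem_Sset N K).mp hx
    refine (mem_Sset N K).mpr ⟨⟨n₁, hNK hn₁⟩ * k * ⟨n₂, hNK hn₂⟩, by push_cast; ring_nf, ?_⟩
    have e1 : (QuotientGroup.mk (⟨n₁, hNK hn₁⟩ : K) : Q) = 1 :=
      (QuotientGroup.eq_one_iff _).mpr (by rw [Subgroup.mem_subgroupOf]; exact hn₁)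
    have e2 : (QuotientGroup.mk (⟨n₂, hNK hn₂⟩ : K) : Q) = 1 :=
      (QuotientGroup.eq_one_iff _).mpr (by rw [Subgroup.mem_subgroupOf]; exact hn₂)
    rw [QuotientGroup.mk_mul, QuotientGroup.mk_mul, e1, e2, one_mul, mul_one]
    exact hk
  intro x n₁ n₂ hn₁ hn₂
  constructor
  · intro h
    have := key _ h _ (N.inv_mem hn₁) _ (N.inv_mem hn₂)
    rwa [show n₁⁻¹ * (n₁ * x * n₂) * n₂⁻¹ = x by group] at this
  · intro h
    exact key _ h _ hn₁ _ hn₂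

lemma mk_mem_R_iff {k : K} : (QuotientGroup.mk k : Q) ∈ R ↔ (k : H) ∈ Sset N K R := by
  constructor
  · intro h; exact (mem_Sset N K).mpr ⟨k, rfl, h⟩
  · intro h
    obtain ⟨k', hk', hR⟩ := (mem_Sset N K).mp h
    rwa [Subtype.coe_injective hk'] at hR

lemma rigid_iff
    (h2 : ∀ x : Q, x ≠ 1 → R ≠ (fun s => s * x) '' R ∧ R ≠ (fun s => x * s) '' R)
    (hSne : (Sset N K R).Nonempty) (g : H)
    (hg : (∀ y : H, y ∈ Sset N K R ↔ y * g ∈ Sset N K R) ∨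
          (∀ y : H, y ∈ Sset N K R ↔ g * y ∈ Sset N K R)) : g ∈ N := by
  obtain ⟨s₀, hs₀⟩ := hSne
  have hs₀K : s₀ ∈ K := Sset_subset N K hs₀
  have hgK : g ∈ K := by
    rcases hg with hg | hg
    · have hsgK : s₀ * g ∈ K := Sset_subset N K ((hg s₀).mp hs₀)
      have : g = s₀⁻¹ * (s₀ * g) := by group
      rw [this]; exact K.mul_mem (K.inv_mem hs₀K) hsgK
    · have hsgK : g * s₀ ∈ K := Sset_subset N K ((hg s₀).mp hs₀)
      have : g = (g * s₀) * s₀⁻¹ := by group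
      rw [this]; exact K.mul_mem hsgK (K.inv_mem hs₀K)
  set gq : Q := QuotientGroup.mk ⟨g, hgK⟩ with hgq
  have hq1 : gq = 1 := by
    by_contra hne
    rcases hg with hg | hg
    · have hstep : ∀ y : Q, y ∈ R ↔ y * gq ∈ R := by
        intro y
        obtain ⟨k, rfl⟩ := QuotientGroup.mk_surjective y
        rw [mk_mem_R_iff N K, hg ((k : H)),
          show (k : H) * g = ((k * ⟨g, hgK⟩ : K) : H) by push_cast; rfl,
          ← mk_mem_R_iff N K, QuotientGroup.mk_mul]
      refine (h2 gq hne).1 ?_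
      ext y
      constructor
      · intro hy
        exact ⟨y * gq⁻¹, (hstep (y * gq⁻¹)).mpr (by rwa [inv_mul_cancel_right]), by
          simp [inv_mul_cancel_right]⟩
      · rintro ⟨r, hr, rfl⟩
        exact (hstep r).mp hr
    · have hstep : ∀ y : Q, y ∈ R ↔ gq * y ∈ R := by
        intro y
        obtain ⟨k, rfl⟩ := QuotientGroup.mk_surjective y
        rw [mk_mem_R_iff N K, hg ((k : H)),
          show g * (k : H) = ((⟨g, hgK⟩ * k : K) : H) by push_cast; rfl,
          ← mk_mem_R_iff N K, QuotientGroup.mk_mul]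
      refine (h2 gq hne).2 ?_
      ext y
      constructor
      · intro hy
        exact ⟨gq⁻¹ * y, (hstep (gq⁻¹ * y)).mpr (by rwa [mul_inv_cancel_left]), by
          simp [mul_inv_cancel_left]⟩
      · rintro ⟨r, hr, rfl⟩
        exact (hstep r).mp hr
  have : (⟨g, hgK⟩ : K) ∈ N.subgroupOf K := (QuotientGroup.eq_one_iff _).mp hq1
  rwa [Subgroup.mem_subgroupOf] at this

lemma haar_adj {S : Set H} {u v : Bool × H} : (haarGraph S).Adj u v ↔
    ((u.1 = false ∧ v.1 = true ∧ v.2 * u.2⁻¹ ∈ S) ∨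
     (u.1 = true ∧ v.1 = false ∧ u.2 * v.2⁻¹ ∈ S)) := Iff.rfl

include hNK in
lemma twin_of_rel {b : Bool} {a a' : H} (hn : a' * a⁻¹ ∈ N) (w : Bool × H) :
    (haarGraph (Sset N K R)).Adj (b, a) w ↔ (haarGraph (Sset N K R)).Adj (b, a') w := by
  obtain ⟨bw, x⟩ := w
  cases b
  · simp only [haar_adj]
    have he : x * a'⁻¹ = 1 * (x * a⁻¹) * (a' * a⁻¹)⁻¹ := by group
    rw [he, Sset_inv N K hNK _ _ _ (N.one_mem) (N.inv_mem hn)]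
    simp
  · simp only [haar_adj]
    have he : a' * x⁻¹ = (a' * a⁻¹) * (a * x⁻¹) * 1 := by group
    rw [he, Sset_inv N K hNK _ _ _ hn (N.one_mem)]
    simp

include hNK in
lemma twin_to_rel
    (h2 : ∀ x : K ⧸ N.subgroupOf K, x ≠ 1 →
      R ≠ (fun s => s * x) '' R ∧ R ≠ (fun s => x * s) '' R)
    (hSne : (Sset N K R).Nonempty) {b b' : Bool} {a a' : H}
    (htw : ∀ w, (haarGraph (Sset N K R)).Adj (b, a) w ↔ (haarGraph (Sset N K R)).Adj (b', a') w) :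
    b = b' ∧ a' * a⁻¹ ∈ N := by
  obtain ⟨s₀, hs₀⟩ := hSne
  cases b <;> cases b'
  · refine ⟨rfl, ?_⟩
    have hS : ∀ x : H, x * a⁻¹ ∈ Sset N K R ↔ x * a'⁻¹ ∈ Sset N K R := by
      intro x
      simpa [haar_adj] using htw (true, x)
    have hg : ∀ y : H, y ∈ Sset N K R ↔ y * (a * a'⁻¹) ∈ Sset N K R := by
      intro y
      have := hS (y * a)
      rwa [show y * a * a⁻¹ = y by group, show y * a * a'⁻¹ = y * (a * a'⁻¹) by group] at this
    have := rigid_iff N K h2 ⟨s₀, hs₀⟩ _ (Or.inl hg)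
    simpa using N.inv_mem this
  · exfalso
    have h := (htw (true, s₀ * a)).mp (Or.inl ⟨rfl, rfl, by
      rwa [show s₀ * a * a⁻¹ = s₀ by group]⟩)
    rcases h with ⟨h1, h2', h3⟩ | ⟨h1, h2', h3⟩ <;> simp_all
  · exfalso
    have h := (htw (false, s₀⁻¹ * a)).mp (Or.inr ⟨rfl, rfl, by
      rwa [show a * (s₀⁻¹ * a)⁻¹ = s₀ by group]⟩)
    rcases h with ⟨h1, h2', h3⟩ | ⟨h1, h2', h3⟩ <;> simp_all
  · refine ⟨rfl, ?_⟩
    have hS : ∀ x : H, a * x⁻¹ ∈ Sset N K R ↔ a' * x⁻¹ ∈ Sset N K R := by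
      intro x
      simpa [haar_adj] using htw (false, x)
    have hg : ∀ y : H, y ∈ Sset N K R ↔ (a' * a⁻¹) * y ∈ Sset N K R := by
      intro y
      have := hS (y⁻¹ * a)
      rwa [show a * (y⁻¹ * a)⁻¹ = y by group,
        show a' * (y⁻¹ * a)⁻¹ = (a' * a⁻¹) * y by group] at this
    exact rigid_iff N K h2 ⟨s₀, hs₀⟩ _ (Or.inr hg)

variable (R) in
def SGamma := haarGraph (Sset N K R)

include hNK in
lemma sigma_twin
    (h2 : ∀ x : K ⧸ N.subgroupOf K, x ≠ 1 →
      R ≠ (fun s => s * x) '' R ∧ R ≠ (fun s => x * s) '' R)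
    (hSne : (Sset N K R).Nonempty)
    (σ : haarGraph (Sset N K R) ≃g haarGraph (Sset N K R))
    {b : Bool} {a a' : H} (hn : a' * a⁻¹ ∈ N) :
    (σ (b, a)).1 = (σ (b, a')).1 ∧ (σ (b, a')).2 * ((σ (b, a)).2)⁻¹ ∈ N := by
  have htw : ∀ w, (haarGraph (Sset N K R)).Adj (σ (b, a)) w ↔
      (haarGraph (Sset N K R)).Adj (σ (b, a')) w := by
    intro w
    have h₁ := σ.map_rel_iff (a := (b, a)) (b := σ.symm w)
    have h₂ := σ.map_rel_iff (a := (b, a')) (b := σ.symm w)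
    rw [σ.apply_symm_apply] at h₁ h₂
    rw [h₁, h₂]
    exact twin_of_rel N K hNK hn (σ.symm w)
  have htw' : ∀ w, (haarGraph (Sset N K R)).Adj ((σ (b, a)).1, (σ (b, a)).2) w ↔
      (haarGraph (Sset N K R)).Adj ((σ (b, a')).1, (σ (b, a')).2) w := by
    simpa using htw
  exact twin_to_rel N K hNK h2 hSne htw'

noncomputable def barFun
    (h2 : ∀ x : K ⧸ N.subgroupOf K, x ≠ 1 →
      R ≠ (fun s => s * x) '' R ∧ R ≠ (fun s => x * s) '' R)
    (hSne : (Sset N K R).Nonempty)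
    (σ : haarGraph (Sset N K R) ≃g haarGraph (Sset N K R)) :
    Bool × Tq N → Bool × Tq N := fun y =>
  Quotient.lift (fun a : H => ((σ (y.1, a)).1, tmk N (σ (y.1, a)).2)) (by
    intro a a' h
    have hn : a' * a⁻¹ ∈ N := QuotientGroup.rightRel_apply.mp h
    obtain ⟨h1, h2'⟩ := sigma_twin N K hNK h2 hSne σ (b := y.1) hn
    rw [Prod.ext_iff]
    exact ⟨h1, (tmk_eq N).mpr h2'⟩) y.2

lemma barFun_mk
    (h2 : ∀ x : K ⧸ N.subgroupOf K, x ≠ 1 →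
      R ≠ (fun s => s * x) '' R ∧ R ≠ (fun s => x * s) '' R)
    (hSne : (Sset N K R).Nonempty)
    (σ : haarGraph (Sset N K R) ≃g haarGraph (Sset N K R)) (b : Bool) (a : H) :
    barFun N K hNK h2 hSne σ (b, tmk N a) = ((σ (b, a)).1, tmk N (σ (b, a)).2) := rfl

noncomputable def barIso
    (h2 : ∀ x : K ⧸ N.subgroupOf K, x ≠ 1 →
      R ≠ (fun s => s * x) '' R ∧ R ≠ (fun s => x * s) '' R)
    (hSne : (Sset N K R).Nonempty)
    (σ : haarGraph (Sset N K R) ≃g haarGraph (Sset N K R)) :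
    barGraph N (Sset N K R) ≃g barGraph N (Sset N K R) where
  toFun := barFun N K hNK h2 hSne σ
  invFun := barFun N K hNK h2 hSne σ.symm
  left_inv := by
    rintro ⟨b, t⟩
    induction t using Quotient.inductionOn with
    | h a =>
      show barFun N K hNK h2 hSne σ.symm ((σ (b, a)).1, tmk N (σ (b, a)).2) = (b, tmk N a)
      rw [barFun_mk]
      have : ((σ (b, a)).1, (σ (b, a)).2) = σ (b, a) := rfl
      rw [this, σ.symm_apply_apply]
  right_inv := by
    rintro ⟨b, t⟩
    induction t using Quotient.inductionOn with
    | h a =>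
      show barFun N K hNK h2 hSne σ ((σ.symm (b, a)).1, tmk N (σ.symm (b, a)).2) = (b, tmk N a)
      rw [barFun_mk]
      have : ((σ.symm (b, a)).1, (σ.symm (b, a)).2) = σ.symm (b, a) := rfl
      rw [this, σ.apply_symm_apply]
  map_rel_iff' := by
    rintro ⟨b, t⟩ ⟨b', t'⟩
    induction t using Quotient.inductionOn with
    | h a =>
    induction t' using Quotient.inductionOn with
    | h a' =>
      show (barGraph N (Sset N K R)).Adj ((σ (b, a)).1, tmk N (σ (b, a)).2)
          ((σ (b', a')).1, tmk N (σ (b', a')).2) ↔ _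
      rw [barGraph_adj_mk N (Sset_inv N K hNK)]
      have e1 : ((σ (b, a)).1, (σ (b, a)).2) = σ (b, a) := rfl
      have e2 : ((σ (b', a')).1, (σ (b', a')).2) = σ (b', a') := rfl
      rw [e1, e2, σ.map_rel_iff]
      exact (barGraph_adj_mk N (Sset_inv N K hNK) b b' a a').symm

lemma tmk_memD_iff {a : H} (hNK : N ≤ K) : (∃ k : K, tmk N a = tmk N (k : H)) ↔ a ∈ K := by
  constructor
  · rintro ⟨k, hk⟩
    have hn : (k : H) * a⁻¹ ∈ N := (tmk_eq N).mp hk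
    have : a = ((k : H) * a⁻¹)⁻¹ * k := by group
    rw [this]
    exact K.mul_mem (K.inv_mem (hNK hn)) k.2
  · intro h
    exact ⟨⟨a, h⟩, rfl⟩

include hNK in
lemma bar_adj_rho (k k' : K) (b b' : Bool) :
    (haarGraph R).Adj (b, QuotientGroup.mk k) (b', QuotientGroup.mk k') ↔
    (barGraph N (Sset N K R)).Adj (b, tmk N (k : H)) (b', tmk N (k' : H)) := by
  rw [barGraph_adj_mk N (Sset_inv N K hNK)]
  have key : ∀ c c' : K, ((QuotientGroup.mk c' : K ⧸ N.subgroupOf K) *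
      (QuotientGroup.mk c)⁻¹ ∈ R) ↔ (c' : H) * (c : H)⁻¹ ∈ Sset N K R := by
    intro c c'
    rw [← QuotientGroup.mk_inv, ← QuotientGroup.mk_mul, mk_mem_R_iff N K]
    push_cast
    rfl
  simp only [haar_adj]
  rw [key k k', key k' k]

include hNK in
lemma bar_adj_D {y z : Bool × Tq N}
    (hadj : (barGraph N (Sset N K R)).Adj y z) (hy : ∃ k : K, y.2 = tmk N (k : H)) :
    ∃ k : K, z.2 = tmk N (k : H) := by
  rcases hadj with ⟨-, -, a, c, ha, hc, hS⟩ | ⟨-, -, a, c, ha, hc, hS⟩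
  · -- y.2 = tmk a, z.2 = tmk c, c * a⁻¹ ∈ S
    rw [ha] at hy
    have haK : a ∈ K := (tmk_memD_iff N K hNK).mp hy
    have hcK : c ∈ K := by
      have : c = (c * a⁻¹) * a := by group
      rw [this]
      exact K.mul_mem (Sset_subset N K hS) haK
    exact ⟨⟨c, hcK⟩, hc⟩
  · -- z.2 = tmk a, y.2 = tmk c, c * a⁻¹ ∈ S
    rw [hc] at hy
    have hcK : c ∈ K := (tmk_memD_iff N K hNK).mp hy
    have haK : a ∈ K := by
      have : a = (c * a⁻¹)⁻¹ * c := by group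
      rw [this]
      exact K.mul_mem (K.inv_mem (Sset_subset N K hS)) hcK
    exact ⟨⟨a, haK⟩, ha⟩

end Rho

lemma vt_subsingleton {G : Type*} [Group G] (R : Set G) (hQ : ∀ x : G, x = 1) :
    IsVertexTransitive (haarGraph R) := by
  intro u v
  obtain ⟨bu, qu⟩ := u; obtain ⟨bv, qv⟩ := v
  have hq : qu = qv := by rw [hQ qu, hQ qv]
  subst hq
  by_cases hb : bu = bv
  · subst hb
    exact ⟨⟨Equiv.refl _, by simp⟩, rfl⟩
  · refine ⟨⟨⟨fun p => (!p.1, p.2), fun p => (!p.1, p.2), by intro p; simp, by intro p; simp⟩,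
      ?_⟩, ?_⟩
    · rintro ⟨b, x⟩ ⟨b', x'⟩
      show (haarGraph R).Adj (!b, x) (!b', x') ↔ (haarGraph R).Adj (b, x) (b', x')
      simp only [haar_adj]
      rw [hQ x, hQ x']
      cases b <;> cases b' <;> simp
    · show (!bu, qu) = (bv, qu)
      cases bu <;> cases bv <;> simp_all

section Key
variable {H : Type*} [Group H] (N K : Subgroup H) (hNK : N ≤ K)
  [hnorm : (N.subgroupOf K).Normal] {R : Set (K ⧸ N.subgroupOf K)}

include hNK in
theorem key_noncayley
    (h1 : ¬ IsVertexTransitive (haarGraph R))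
    (h2 : ∀ x : K ⧸ N.subgroupOf K, x ≠ 1 →
      R ≠ (fun s => s * x) '' R ∧ R ≠ (fun s => x * s) '' R) :
    ¬ IsCayleyGraph (haarGraph (Sset N K R)) := by
  intro hC
  by_cases hQ : ∀ x : K ⧸ N.subgroupOf K, x = 1
  · exact h1 (vt_subsingleton R hQ)
  push_neg at hQ
  obtain ⟨x₀, hx₀⟩ := hQ
  have hRne : R.Nonempty := by
    rcases Set.eq_empty_or_nonempty R with he | h
    · exact absurd (by rw [he]; simp) (h2 x₀ hx₀).1
    · exact h
  have hSne : (Sset N K R).Nonempty := by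
    obtain ⟨r, hr⟩ := hRne
    obtain ⟨k, hk⟩ := QuotientGroup.mk_surjective r
    exact ⟨(k : H), (mk_mem_R_iff N K).mp (by rwa [hk])⟩
  obtain ⟨G, hGadj, hGreg⟩ := hC
  apply h1
  intro u v
  obtain ⟨bu, qu⟩ := u; obtain ⟨bv, qv⟩ := v
  obtain ⟨ku, hku⟩ := QuotientGroup.mk_surjective qu
  obtain ⟨kv, hkv⟩ := QuotientGroup.mk_surjective qv
  obtain ⟨gp, ⟨hgG, hgu⟩, -⟩ := hGreg (bu, (ku : H)) (bv, (kv : H))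
  set σ : haarGraph (Sset N K R) ≃g haarGraph (Sset N K R) :=
    ⟨gp, fun {x y} => hGadj gp hgG x y⟩ with hσ
  have hσap : ∀ w, σ w = gp w := fun w => rfl
  refine swap_iso_exists (haarGraph R) (barGraph N (Sset N K R))
    (fun x => (x.1, rhoQ N K x.2)) (fun y => (y.1, ggT N K hNK y.2))
    {y | ∃ k : K, y.2 = tmk N (k : H)} (barIso N K hNK h2 hSne σ)
    ?_ ?_ ?_ ?_ ?_ ?_ (bu, qu) (bv, qv) ?_
  · rintro ⟨b, t⟩ ⟨k, hk⟩
    simp only at hk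
    dsimp only
    rw [hk, ggT_tmk, rhoQ_mk]
  · rintro ⟨b, q⟩
    obtain ⟨k, rfl⟩ := QuotientGroup.mk_surjective q
    dsimp only
    rw [rhoQ_mk, ggT_tmk]
  · exact fun {y z} ha hy => bar_adj_D N K hNK ha hy
  · rintro ⟨b, q⟩
    obtain ⟨k, rfl⟩ := QuotientGroup.mk_surjective q
    exact ⟨k, by dsimp only; rw [rhoQ_mk]⟩
  · rintro ⟨b, q⟩ ⟨b', q'⟩
    obtain ⟨k, rfl⟩ := QuotientGroup.mk_surjective q
    obtain ⟨k', rfl⟩ := QuotientGroup.mk_surjective q'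
    dsimp only
    rw [rhoQ_mk, rhoQ_mk]
    exact bar_adj_rho N K hNK k k' b b'
  · -- reachability pullback
    intro x y hr
    obtain ⟨p⟩ := hr
    have hlift : ∀ (x : Bool × (K ⧸ N.subgroupOf K)) (z : Bool × Tq N),
        (barGraph N (Sset N K R)).Adj (x.1, rhoQ N K x.2) z →
        ∃ y' : Bool × (K ⧸ N.subgroupOf K), (y'.1, rhoQ N K y'.2) = z := by
      intro x z ha
      have hxD : ∃ k : K, rhoQ N K x.2 = tmk N (k : H) := by
        obtain ⟨k, hk⟩ := QuotientGroup.mk_surjective x.2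
        exact ⟨k, by rw [← hk, rhoQ_mk]⟩
      obtain ⟨k, hk⟩ := bar_adj_D N K hNK ha hxD
      refine ⟨(z.1, QuotientGroup.mk k), ?_⟩
      dsimp only
      rw [rhoQ_mk, ← hk]
    have hadj' : ∀ x y : Bool × (K ⧸ N.subgroupOf K),
        (haarGraph R).Adj x y ↔
        (barGraph N (Sset N K R)).Adj (x.1, rhoQ N K x.2) (y.1, rhoQ N K y.2) := by
      rintro ⟨b, q⟩ ⟨b', q'⟩
      obtain ⟨k, rfl⟩ := QuotientGroup.mk_surjective q
      obtain ⟨k', rfl⟩ := QuotientGroup.mk_surjective q'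
      dsimp only
      rw [rhoQ_mk, rhoQ_mk]
      exact bar_adj_rho N K hNK k k' b b'
    obtain ⟨y', hy', hrch⟩ := walk_pull (haarGraph R) (barGraph N (Sset N K R))
      (fun x => (x.1, rhoQ N K x.2)) hadj' hlift p x rfl
    have : y' = y := by
      have hy'' : (y'.1, rhoQ N K y'.2) = (y.1, rhoQ N K y.2) := hy'
      rw [Prod.mk.injEq] at hy''
      exact Prod.ext hy''.1 (rhoQ_inj N K hy''.2)
    rwa [this] at hrch
  · -- huv
    show barIso N K hNK h2 hSne σ (bu, rhoQ N K qu) = (bv, rhoQ N K qv)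
    rw [← hku, ← hkv, rhoQ_mk, rhoQ_mk]
    show ((σ (bu, (ku : H))).1, tmk N (σ (bu, (ku : H))).2) = (bv, tmk N (kv : H))
    rw [hσap, hgu]
end Key


theorem normal_series_criterion_non_cayley_haar
    {H : Type*} [Group H] [Finite H] (n : ℕ)
    (c : Fin (n + 1) → Subgroup H)
    (h0 : c 0 = ⊥) (hn : c (Fin.last n) = ⊤)
    (hle : ∀ i : Fin n, c i.castSucc ≤ c i.succ)
    (hnorm : ∀ i : Fin n, ((c i.castSucc).subgroupOf (c i.succ)).Normal)
    (i : Fin n)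
    [inst : ((c i.castSucc).subgroupOf (c i.succ)).Normal]
    (R : Set (↥(c i.succ) ⧸ (c i.castSucc).subgroupOf (c i.succ)))
    (h1 : ¬ IsVertexTransitive (haarGraph R))
    (h2 : ∀ x : ↥(c i.succ) ⧸ (c i.castSucc).subgroupOf (c i.succ), x ≠ 1 →
      R ≠ (fun s => s * x) '' R ∧ R ≠ (fun s => x * s) '' R) :
    ∃ S : Set H, ¬ IsCayleyGraph (haarGraph S) := by
  exact ⟨Sset (c i.castSucc) (c i.succ) R,
    key_noncayley (c i.castSucc) (c i.succ) (hle i) h1 h2⟩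
end

section
/- Let p and q be distinct primes with q > 2, and let H be a finite inner abelian group with normal elementary abelian Sylow p-subgroup P of order p^n and cyclic Sylow q-subgroup Q = ⟨b⟩, so that H = P⟨b⟩. Let S_1 ⊆ P with 1 ∈ S_1, let Γ = H(H, S_1 ∪ {b}), and let Ā be the subgroup of Aut(Γ) consisting of all automorphisms fixing each of the two bipartition sets H_0 and H_1 setwise. If either S_1 = S_1^{-1}, or |S_1| = 4, |S_1 ∩ S_1^{-1}| = 3 and |⟨S_1⟩| = p^2, then Ā acts faithfully on H_0; that is, any automorphism in Ā fixing every vertex of H_0 is the identity. -/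
theorem haar_bipartite_stabilizer_faithful
    {H : Type*} [Group H] [Finite H] (p q : ℕ) (hp : p.Prime) (hq : q.Prime)
    (hpq : p ≠ q) (hq2 : 2 < q)
    (hIA : IsInnerAbelian H)
    (P : Sylow p H) (hPnorm : (P : Subgroup H).Normal)
    (n : ℕ) (hPcard : Nat.card (P : Subgroup H) = p ^ n)
    (hPelem : ∀ x ∈ (P : Subgroup H), x ^ p = 1)
    (hPab : ∀ x ∈ (P : Subgroup H), ∀ y ∈ (P : Subgroup H), x * y = y * x)
    (b : H) (Q : Sylow q H) (hQ : (Q : Subgroup H) = Subgroup.zpowers b)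
    (hHPQ : (P : Subgroup H) ⊔ Subgroup.zpowers b = ⊤)
    (S1 : Set H) (hS1P : S1 ⊆ (P : Subgroup H)) (hS1one : (1 : H) ∈ S1)
    (hS1 : S1 = S1⁻¹ ∨
      (S1.ncard = 4 ∧ (S1 ∩ S1⁻¹).ncard = 3 ∧
        Nat.card (Subgroup.closure S1) = p ^ 2))
    (f : haarGraph (S1 ∪ {b}) ≃g haarGraph (S1 ∪ {b}))
    (hbip : ∀ v : Bool × H, (f v).1 = v.1)
    (hfixH0 : ∀ h : H, f (false, h) = (false, h)) :
    ∀ v : Bool × H, f v = v := by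
  -- b is not in P
  have hbP : b ∈ (P : Subgroup H) → False := by
    intro hb
    have hPtop : (P : Subgroup H) = ⊤ := by
      rw [← hHPQ]
      exact ((sup_eq_left).mpr ((Subgroup.zpowers_le).mpr hb)).symm
    exact hIA.1 (fun a c =>
      hPab a (hPtop ▸ Subgroup.mem_top a) c (hPtop ▸ Subgroup.mem_top c))
  -- if b^2 ∈ P then b = 1
  have hb1 : b ^ 2 ∈ (P : Subgroup H) → b = 1 := by
    intro hb2
    have h2p : b ^ (2 * p) = 1 := by
      have := hPelem _ hb2
      rwa [← pow_mul] at this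
    have hbQ : b ∈ (Q : Subgroup H) := hQ ▸ Subgroup.mem_zpowers b
    obtain ⟨k, hk⟩ := Q.2 ⟨b, hbQ⟩
    have hqk : b ^ q ^ k = 1 := by
      have := congrArg (Subtype.val) hk
      simpa using this
    have hd1 : orderOf b ∣ 2 * p := orderOf_dvd_of_pow_eq_one h2p
    have hd2 : orderOf b ∣ q ^ k := orderOf_dvd_of_pow_eq_one hqk
    have hcop : Nat.Coprime (q ^ k) (2 * p) := by
      apply Nat.Coprime.pow_left
      apply Nat.Coprime.mul_right
      · exact (Nat.coprime_primes hq Nat.prime_two).mpr (by omega)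
      · exact (Nat.coprime_primes hq hp).mpr (Ne.symm hpq)
    have : orderOf b ∣ 1 := hcop ▸ Nat.dvd_gcd hd2 hd1
    exact orderOf_eq_one_iff.mp (Nat.dvd_one.mp this)
  rintro ⟨i, h⟩
  cases i
  · exact hfixH0 h
  · set h' := (f (true, h)).2 with hh'
    have hft : f (true, h) = (true, h') := by
      have := hbip (true, h)
      exact Prod.ext this rfl
    have key : ∀ x : H, (h * x⁻¹ ∈ S1 ∪ {b}) ↔ (h' * x⁻¹ ∈ S1 ∪ {b}) := by
      intro x
      have hmap := f.map_rel_iff (a := (true, h)) (b := (false, x))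
      rw [hfixH0, hft] at hmap
      constructor
      · intro hx
        have : (haarGraph (S1 ∪ {b})).Adj (true, h') (false, x) :=
          hmap.mpr (Or.inr ⟨rfl, rfl, hx⟩)
        rcases this with ⟨h1, _, _⟩ | ⟨_, _, h3⟩
        · simp at h1
        · exact h3
      · intro hx
        have : (haarGraph (S1 ∪ {b})).Adj (true, h) (false, x) :=
          hmap.mp (Or.inr ⟨rfl, rfl, hx⟩)
        rcases this with ⟨h1, _, _⟩ | ⟨_, _, h3⟩
        · simp at h1
        · exact h3
    have hg1 : h' * h⁻¹ ∈ S1 ∪ {b} :=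
      (key h).mp (by rw [mul_inv_cancel]; exact Or.inl hS1one)
    have hg2 : h' * h⁻¹ * b ∈ S1 ∪ {b} := by
      have hpre : h * (b⁻¹ * h)⁻¹ ∈ S1 ∪ {b} := by
        simpa [mul_inv_rev, mul_assoc] using (Or.inr rfl : b ∈ S1 ∪ {b})
      have := (key (b⁻¹ * h)).mp hpre
      simpa [mul_inv_rev, mul_assoc] using this
    have hg : h' * h⁻¹ = 1 := by
      rcases hg1 with hgS | hgb
      · rcases hg2 with hgbS | hgbb
        · exfalso
          apply hbP
          have : (h' * h⁻¹)⁻¹ * (h' * h⁻¹ * b) ∈ (P : Subgroup H) :=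
            Subgroup.mul_mem _ (Subgroup.inv_mem _ (hS1P hgS)) (hS1P hgbS)
          simpa [mul_assoc] using this
        · have : h' * h⁻¹ * b = 1 * b := by
            simpa using (Set.mem_singleton_iff.mp hgbb)
          exact mul_right_cancel this
      · have hgb' : h' * h⁻¹ = b := Set.mem_singleton_iff.mp hgb
        have hb2 : b * b ∈ S1 ∪ {b} := by rw [hgb'] at hg2; exact hg2
        rcases hb2 with hb2S | hb2b
        · have : b = 1 := hb1 (by rw [pow_two]; exact hS1P hb2S)
          rw [hgb', this]
        · have : b * b = b := Set.mem_singleton_iff.mp hb2b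
          have hb0 : b = 1 := by
            have := mul_right_cancel (this.trans (one_mul b).symm)
            exact this
          rw [hgb', hb0]
    have : h' = h := by
      have := mul_eq_one_iff_eq_inv.mp hg
      simpa using this
    rw [hft, this]
end

section
/- Let p and q be distinct primes with q > 2, and let H be a finite inner abelian group with normal Sylow p-subgroup P of order p (i.e. n = 1) and cyclic Sylow q-subgroup Q = ⟨b⟩, so that H = P⟨b⟩. Let a ∈ P be a non-identity element and let Γ = H(H, {1, a, a^{-1}, b}). Then every automorphism of Γ fixes each of the two bipartition sets H_0 and H_1 setwise. -/
lemma zmod2_cases : ∀ x : ZMod 2, x = 0 ∨ x = 1 := by decide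
lemma zmod3_cases : ∀ x : ZMod 3, x = 0 ∨ x = 1 ∨ x ^ 2 = 1 := by decide

section Aux2
variable {G : Type*} [Group G]

lemma aux_zpow_inj' (a : G) (p : ℕ) (h : orderOf a = p) (m n : ℤ) :
    a ^ m = a ^ n ↔ (p : ℤ) ∣ m - n := by
  rw [← h, orderOf_dvd_iff_zpow_eq_one, zpow_sub, mul_inv_eq_one, eq_comm]

lemma aux_dvd_small' (p : ℕ) (hp5 : 5 ≤ p) (d : ℤ) (h : (p : ℤ) ∣ d)
    (h1 : -4 ≤ d) (h2 : d ≤ 4) (h3 : d ≠ 0) : False := by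
  rcases h with ⟨c, rfl⟩
  have h5 : (5 : ℤ) ≤ p := by exact_mod_cast hp5
  have hc : c ≠ 0 := by rintro rfl; simp at h3
  rcases lt_trichotomy c 0 with hc' | hc' | hc'
  · nlinarith
  · exact hc hc'
  · nlinarith

lemma aux_pow_lin (a : G) (p : ℕ) (hord : orderOf a = p) (hp5 : 5 ≤ p)
    (g : G → G) (hinj : Function.Injective g)
    (hstep : ∀ y, g (a * y) = a * g y ∨ g (a * y) = a⁻¹ * g y) (z : G) :
    ∃ ε : ℤ, (ε = 1 ∨ ε = -1) ∧ ∀ k : ℤ, g (a ^ k * z) = a ^ (ε * k) * g z := by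
  have hp0 : 0 < p := by omega
  have ha2 : a * a ≠ 1 := by
    intro h
    have h2 : a ^ (2:ℤ) = a ^ (0:ℤ) := by
      rw [zpow_two, zpow_zero]; exact h
    rw [aux_zpow_inj' a p hord] at h2
    exact aux_dvd_small' p hp5 _ h2 (by norm_num) (by norm_num) (by norm_num)
  -- propagation lemmas
  have prop1 : ∀ y, g (a * y) = a * g y → g (a * (a * y)) = a * g (a * y) := by
    intro y hy
    rcases hstep (a * y) with h | h
    · exact h
    · exfalso
      have : g (a * (a * y)) = g y := by rw [h, hy]; group
      have h6 := hinj this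
      apply ha2
      have h7 : a * a * y = 1 * y := by rw [mul_assoc, one_mul]; exact h6
      exact mul_right_cancel h7
  have prop2 : ∀ y, g (a * y) = a⁻¹ * g y → g (a * (a * y)) = a⁻¹ * g (a * y) := by
    intro y hy
    rcases hstep (a * y) with h | h
    · exfalso
      have : g (a * (a * y)) = g y := by rw [h, hy]; group
      have h6 := hinj this
      apply ha2
      have h7 : a * a * y = 1 * y := by rw [mul_assoc, one_mul]; exact h6
      exact mul_right_cancel h7
    · exact h
  -- reduction of integer powers to small natural powers
  have hred : ∀ (k : ℤ) (c : G), (∀ n : ℕ, g (a ^ n * z) = c ^ n * g z) →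
      orderOf c = p → g (a ^ k * z) = c ^ k * g z := by
    intro k c hc hordc
    set n : ℕ := (k % (p : ℤ)).toNat with hn
    have hpk : (p : ℤ) ∣ k - (n : ℤ) := by
      have h1 : 0 ≤ k % (p : ℤ) := Int.emod_nonneg k (by exact_mod_cast hp0.ne')
      have h2 : (n : ℤ) = k % (p : ℤ) := Int.toNat_of_nonneg h1
      rw [h2, Int.emod_def]
      exact ⟨k / (p:ℤ), by ring⟩
    have e1 : a ^ k = a ^ (n : ℤ) := (aux_zpow_inj' a p hord _ _).mpr hpk
    have e2 : c ^ k = c ^ (n : ℤ) := (aux_zpow_inj' c p hordc _ _).mpr hpk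
    rw [e1, e2, zpow_natCast, zpow_natCast]
    exact hc n
  have horda : orderOf a⁻¹ = p := by rw [orderOf_inv, hord]
  rcases hstep z with h | h
  · refine ⟨1, Or.inl rfl, fun k => ?_⟩
    have key : ∀ n : ℕ, g (a ^ n * z) = a ^ n * g z ∧ g (a * (a ^ n * z)) = a * g (a ^ n * z) := by
      intro n
      induction n with
      | zero => simpa using h
      | succ m ih =>
        have e : a ^ (m + 1) * z = a * (a ^ m * z) := by rw [pow_succ]; group
        constructor
        · rw [e, ih.2, ih.1, ← mul_assoc, ← pow_succ']
        · rw [e]; exact prop1 _ ih.2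
    have := hred k a (fun n => (key n).1) hord
    simpa using this
  · refine ⟨-1, Or.inr rfl, fun k => ?_⟩
    have key : ∀ n : ℕ, g (a ^ n * z) = (a⁻¹) ^ n * g z ∧
        g (a * (a ^ n * z)) = a⁻¹ * g (a ^ n * z) := by
      intro n
      induction n with
      | zero => simpa using h
      | succ m ih =>
        have e : a ^ (m + 1) * z = a * (a ^ m * z) := by rw [pow_succ]; group
        constructor
        · rw [e, ih.2, ih.1, ← mul_assoc, ← pow_succ']
        · rw [e]; exact prop2 _ ih.2
    have := hred k a⁻¹ (fun n => (key n).1) horda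
    rw [this, inv_zpow, ← zpow_neg]
    ring_nf

variable (a b : G) (p : ℕ) (r : ℤ)

section key
variable (hord : orderOf a = p) (hp5 : 5 ≤ p)
  (hbN : ∀ j : ℤ, b ≠ a ^ j) (hb2N : ∀ j : ℤ, b * b ≠ a ^ j)
  (hbam : ∀ m : ℤ, b * a ^ m = a ^ (r * m) * b)
include hord hp5 hbN hb2N hbam

lemma aux_keyL : ∀ s₁ s₂ s₃ s₄ : G,
    (s₁ = b ∨ ∃ e : ℤ, (e = 0 ∨ e = 1 ∨ e = -1) ∧ s₁ = a ^ e) →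
    (s₂ = b ∨ ∃ e : ℤ, (e = 0 ∨ e = 1 ∨ e = -1) ∧ s₂ = a ^ e) →
    (s₃ = b ∨ ∃ e : ℤ, (e = 0 ∨ e = 1 ∨ e = -1) ∧ s₃ = a ^ e) →
    (s₄ = b ∨ ∃ e : ℤ, (e = 0 ∨ e = 1 ∨ e = -1) ∧ s₄ = a ^ e) →
    s₁ ≠ s₂ → s₁ ≠ s₃ → s₂⁻¹ * s₁ = s₄⁻¹ * s₃ →
    s₂⁻¹ * s₁ = a ∨ s₂⁻¹ * s₁ = a⁻¹ := by
  intro s₁ s₂ s₃ s₄ h₁ h₂ h₃ h₄ hne12 hne13 heq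
  rcases h₁ with hb₁ | ⟨e₁, he₁, rfl⟩ <;> rcases h₂ with hb₂ | ⟨e₂, he₂, rfl⟩ <;>
    rcases h₃ with hb₃ | ⟨e₃, he₃, rfl⟩ <;> rcases h₄ with hb₄ | ⟨e₄, he₄, rfl⟩
  -- 1 (b,b,b,b)
  · rw [hb₁] at hne12; exact absurd hb₂.symm hne12
  -- 2 (b,b,b,e4)
  · rw [hb₁] at hne12; exact absurd hb₂.symm hne12
  -- 3 (b,b,e3,b)
  · rw [hb₁] at hne12; exact absurd hb₂.symm hne12
  -- 4 (b,b,e3,e4)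
  · rw [hb₁] at hne12; exact absurd hb₂.symm hne12
  -- 5 (b,e2,b,b)
  · rw [hb₁] at hne13; exact absurd hb₃.symm hne13
  -- 6 (b,e2,b,e4)
  · rw [hb₁] at hne13; exact absurd hb₃.symm hne13
  -- 7 (b,e2,e3,b) : b*b = a^(r*e₂+e₃)
  · exfalso
    rw [hb₁] at heq; rw [hb₄] at heq
    apply hb2N (r * e₂ + e₃)
    have h1 : b * ((a ^ e₂)⁻¹ * b) = a ^ e₃ := by rw [heq]; group
    rw [← zpow_neg, ← mul_assoc, hbam (-e₂)] at h1
    have h2 : b * b = (a ^ (r * -e₂))⁻¹ * a ^ e₃ := by rw [← h1]; group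
    rw [h2, ← zpow_neg, ← zpow_add]
    ring_nf
  -- 8 (b,e2,e3,e4) : b = a^(e₂+e₃-e₄)
  · exfalso
    rw [hb₁] at heq
    apply hbN (e₂ + (-e₄ + e₃))
    have h1 : b = a ^ e₂ * ((a ^ e₄)⁻¹ * a ^ e₃) := by rw [← heq]; group
    rw [← zpow_neg, ← zpow_add, ← zpow_add] at h1
    exact h1
  -- 9 (e1,b,b,b)
  · rw [hb₂, hb₃, hb₄] at heq
    exact absurd (mul_left_cancel heq).symm (hbN e₁)
  -- 10 (e1,b,b,e4) : b*b = a^(r*e₄+e₁)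
  · exfalso
    rw [hb₂, hb₃] at heq
    apply hb2N (r * e₄ + e₁)
    have h1 : b * ((a ^ e₄)⁻¹ * b) = a ^ e₁ := by rw [← heq]; group
    rw [← zpow_neg, ← mul_assoc, hbam (-e₄)] at h1
    have h2 : b * b = (a ^ (r * -e₄))⁻¹ * a ^ e₁ := by rw [← h1]; group
    rw [h2, ← zpow_neg, ← zpow_add]
    ring_nf
  -- 11 (e1,b,e3,b)
  · rw [hb₂, hb₄] at heq
    exact absurd (mul_left_cancel heq) hne13
  -- 12 (e1,b,e3,e4) : b = a^(e₁ - r*(-e₄+e₃))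
  · exfalso
    rw [hb₂] at heq
    apply hbN (-(r * (-e₄ + e₃)) + e₁)
    have h1 : a ^ e₁ = b * ((a ^ e₄)⁻¹ * a ^ e₃) := by rw [← heq]; group
    rw [← zpow_neg, ← zpow_add, hbam (-e₄ + e₃)] at h1
    have h2 : b = (a ^ (r * (-e₄ + e₃)))⁻¹ * a ^ e₁ := by rw [h1]; group
    rw [h2, ← zpow_neg, ← zpow_add]
  -- 13 (e1,e2,b,b)
  · rw [hb₃, hb₄] at heq
    rw [inv_mul_cancel, inv_mul_eq_one] at heq
    exact absurd heq.symm hne12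
  -- 14 (e1,e2,b,e4) : b = a^(e₄ + e₁ - e₂)
  · exfalso
    rw [hb₃] at heq
    apply hbN (e₄ + (-e₂ + e₁))
    have h1 : b = a ^ e₄ * ((a ^ e₂)⁻¹ * a ^ e₁) := by rw [heq]; group
    rw [← zpow_neg, ← zpow_add, ← zpow_add] at h1
    exact h1
  -- 15 (e1,e2,e3,b) : b = a^(-(r*(-e₂+e₁)) + e₃)
  · exfalso
    rw [hb₄] at heq
    apply hbN (-(r * (-e₂ + e₁)) + e₃)
    have h1 : b * ((a ^ e₂)⁻¹ * a ^ e₁) = a ^ e₃ := by rw [heq]; group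
    rw [← zpow_neg, ← zpow_add, hbam (-e₂ + e₁)] at h1
    have h2 : b = (a ^ (r * (-e₂ + e₁)))⁻¹ * a ^ e₃ := by rw [← h1]; group
    rw [h2, ← zpow_neg, ← zpow_add]
  -- 16 all small
  · have hd : (a ^ e₂)⁻¹ * a ^ e₁ = a ^ (-e₂ + e₁) := by
      rw [← zpow_neg, ← zpow_add]
    have hd' : (a ^ e₄)⁻¹ * a ^ e₃ = a ^ (-e₄ + e₃) := by
      rw [← zpow_neg, ← zpow_add]
    rw [hd, hd'] at heq
    have he : -e₂ + e₁ = -e₄ + e₃ := by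
      rw [aux_zpow_inj' a p hord] at heq
      by_contra hne
      exact aux_dvd_small' p hp5 _ heq (by omega) (by omega) (by omega)
    have hne12' : e₁ ≠ e₂ := by rintro rfl; exact hne12 rfl
    have hne13' : e₁ ≠ e₃ := by rintro rfl; exact hne13 rfl
    have hor : -e₂ + e₁ = 1 ∨ -e₂ + e₁ = -1 := by omega
    rcases hor with h | h
    · left; rw [hd, h, zpow_one]
    · right; rw [hd, h, zpow_neg, zpow_one]

lemma aux_keyR : ∀ s₁ s₂ s₃ s₄ : G,
    (s₁ = b ∨ ∃ e : ℤ, (e = 0 ∨ e = 1 ∨ e = -1) ∧ s₁ = a ^ e) →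
    (s₂ = b ∨ ∃ e : ℤ, (e = 0 ∨ e = 1 ∨ e = -1) ∧ s₂ = a ^ e) →
    (s₃ = b ∨ ∃ e : ℤ, (e = 0 ∨ e = 1 ∨ e = -1) ∧ s₃ = a ^ e) →
    (s₄ = b ∨ ∃ e : ℤ, (e = 0 ∨ e = 1 ∨ e = -1) ∧ s₄ = a ^ e) →
    s₁ ≠ s₂ → s₁ ≠ s₃ → s₂ * s₁⁻¹ = s₄ * s₃⁻¹ →
    s₂ * s₁⁻¹ = a ∨ s₂ * s₁⁻¹ = a⁻¹ := by
  intro s₁ s₂ s₃ s₄ h₁ h₂ h₃ h₄ hne12 hne13 heq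
  rcases h₁ with hb₁ | ⟨e₁, he₁, rfl⟩ <;> rcases h₂ with hb₂ | ⟨e₂, he₂, rfl⟩ <;>
    rcases h₃ with hb₃ | ⟨e₃, he₃, rfl⟩ <;> rcases h₄ with hb₄ | ⟨e₄, he₄, rfl⟩
  · rw [hb₁] at hne12; exact absurd hb₂.symm hne12
  · rw [hb₁] at hne12; exact absurd hb₂.symm hne12
  · rw [hb₁] at hne12; exact absurd hb₂.symm hne12
  · rw [hb₁] at hne12; exact absurd hb₂.symm hne12
  · rw [hb₁] at hne13; exact absurd hb₃.symm hne13
  · rw [hb₁] at hne13; exact absurd hb₃.symm hne13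
  -- 7 (b,e2,e3,b) : a^e₂ * b⁻¹ = b * (a^e₃)⁻¹  ⇒ b*b = a^(r*e₃+e₂)... 
  · exfalso
    rw [hb₁, hb₄] at heq
    apply hb2N (-(r * -e₃) + e₂)
    have h1 : a ^ e₂ = b * (a ^ e₃)⁻¹ * b := by rw [← heq]; group
    rw [← zpow_neg, hbam (-e₃)] at h1
    have h2 : b * b = (a ^ (r * -e₃))⁻¹ * a ^ e₂ := by rw [h1]; group
    rw [h2, ← zpow_neg, ← zpow_add]
  -- 8 (b,e2,e3,e4) : a^e₂ * b⁻¹ = a^e₄ * (a^e₃)⁻¹ ⇒ b = a^(-(e₄-e₃)+e₂)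
  · exfalso
    rw [hb₁] at heq
    apply hbN (-(e₄ + -e₃) + e₂)
    have h1 : b = (a ^ e₄ * (a ^ e₃)⁻¹)⁻¹ * a ^ e₂ := by rw [← heq]; group
    rw [← zpow_neg, ← zpow_add, ← zpow_neg, ← zpow_add] at h1
    exact h1
  -- 9 (e1,b,b,b)
  · rw [hb₂, hb₃, hb₄] at heq
    exact absurd (inv_injective (mul_left_cancel heq)).symm (hbN e₁)
  -- 10 (e1,b,b,e4) : b * (a^e₁)⁻¹ = a^e₄ * b⁻¹ ⇒ b*b = a^(r*e₁+e₄)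
  · exfalso
    rw [hb₂, hb₃] at heq
    apply hb2N (-(r * -e₁) + e₄)
    have h1 : b * (a ^ e₁)⁻¹ * b = a ^ e₄ := by rw [heq]; group
    rw [← zpow_neg, hbam (-e₁)] at h1
    have h2 : b * b = (a ^ (r * -e₁))⁻¹ * a ^ e₄ := by rw [← h1]; group
    rw [h2, ← zpow_neg, ← zpow_add]
  -- 11 (e1,b,e3,b)
  · rw [hb₂, hb₄] at heq
    exact absurd (inv_injective (mul_left_cancel heq)) hne13
  -- 12 (e1,b,e3,e4) : b * (a^e₁)⁻¹ = a^e₄ * (a^e₃)⁻¹ ⇒ b = a^(e₄ + -e₃ + e₁)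
  · exfalso
    rw [hb₂] at heq
    apply hbN (e₄ + (-e₃ + e₁))
    have h1 : b = a ^ e₄ * (a ^ e₃)⁻¹ * a ^ e₁ := by rw [← heq]; group
    rw [← zpow_neg, mul_assoc, ← zpow_add, ← zpow_add] at h1
    exact h1
  -- 13 (e1,e2,b,b)
  · rw [hb₃, hb₄] at heq
    rw [mul_inv_cancel, mul_inv_eq_one] at heq
    exact absurd heq.symm hne12
  -- 14 (e1,e2,b,e4) : a^e₂ * (a^e₁)⁻¹ = a^e₄ * b⁻¹ ⇒ b = a^(-(e₂-e₁)+e₄)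
  · exfalso
    rw [hb₃] at heq
    apply hbN (-(e₂ + -e₁) + e₄)
    have h1 : b = (a ^ e₂ * (a ^ e₁)⁻¹)⁻¹ * a ^ e₄ := by rw [heq]; group
    rw [← zpow_neg, ← zpow_add, ← zpow_neg, ← zpow_add] at h1
    exact h1
  -- 15 (e1,e2,e3,b) : a^e₂ * (a^e₁)⁻¹ = b * (a^e₃)⁻¹ ⇒ b = a^(e₂ + -e₁ + e₃)
  · exfalso
    rw [hb₄] at heq
    apply hbN (e₂ + (-e₁ + e₃))
    have h1 : b = a ^ e₂ * (a ^ e₁)⁻¹ * a ^ e₃ := by rw [heq]; group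
    rw [← zpow_neg, mul_assoc, ← zpow_add, ← zpow_add] at h1
    exact h1
  -- 16 all small
  · have hd : a ^ e₂ * (a ^ e₁)⁻¹ = a ^ (e₂ + -e₁) := by
      rw [← zpow_neg, ← zpow_add]
    have hd' : a ^ e₄ * (a ^ e₃)⁻¹ = a ^ (e₄ + -e₃) := by
      rw [← zpow_neg, ← zpow_add]
    rw [hd, hd'] at heq
    have he : e₂ + -e₁ = e₄ + -e₃ := by
      rw [aux_zpow_inj' a p hord] at heq
      by_contra hne
      exact aux_dvd_small' p hp5 _ heq (by omega) (by omega) (by omega)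
    have hne12' : e₁ ≠ e₂ := by rintro rfl; exact hne12 rfl
    have hne13' : e₁ ≠ e₃ := by rintro rfl; exact hne13 rfl
    have hor : e₂ + -e₁ = 1 ∨ e₂ + -e₁ = -1 := by omega
    rcases hor with h | h
    · left; rw [hd, h, zpow_one]
    · right; rw [hd, h, zpow_neg, zpow_one]

end key
end Aux2




lemma aux_main {H : Type*} [Group H] (a b : H) (p : ℕ) (r : ℤ)
    (horda : orderOf a = p) (hp5 : 5 ≤ p) (ha1 : a ≠ 1)
    (hbN : ∀ j : ℤ, b ≠ a ^ j) (hb2N : ∀ j : ℤ, b * b ≠ a ^ j)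
    (hbam : ∀ m : ℤ, b * a ^ m = a ^ (r * m) * b)
    (htop : Subgroup.closure ({a, b} : Set H) = ⊤)
    (hrr : ∀ ε₁ ε₂ : ℤ, (ε₁ = 1 ∨ ε₁ = -1) → (ε₂ = 1 ∨ ε₂ = -1) →
      ¬ ((p : ℤ) ∣ ε₁ - r * (ε₂ * r)))
    (S : Set H) (hSdef : S = {1, a, a⁻¹, b})
    (f : haarGraph S ≃g haarGraph S) :
    ∀ v : Bool × H, (f v).1 = v.1 := by
  have hdvd_iff : ∀ m n : ℤ, a ^ m = a ^ n ↔ (p : ℤ) ∣ m - n := aux_zpow_inj' a p horda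
  have hSmem : ∀ s : H, s ∈ S ↔ (s = 1 ∨ s = a ∨ s = a⁻¹ ∨ s = b) := by
    intro s
    rw [hSdef]
    simp [Set.mem_insert_iff]
  have hSkey : ∀ s : H, s ∈ S →
      (s = b ∨ ∃ e : ℤ, (e = 0 ∨ e = 1 ∨ e = -1) ∧ s = a ^ e) := by
    intro s hs
    rcases (hSmem s).mp hs with h | h | h | h
    · exact Or.inr ⟨0, Or.inl rfl, by rw [h, zpow_zero]⟩
    · exact Or.inr ⟨1, Or.inr (Or.inl rfl), by rw [h, zpow_one]⟩
    · exact Or.inr ⟨-1, Or.inr (Or.inr rfl), by rw [h, zpow_neg, zpow_one]⟩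
    · exact Or.inl h
  have h1S : (1 : H) ∈ S := by rw [hSmem]; tauto
  have haS : a ∈ S := by rw [hSmem]; tauto
  have haiS : a⁻¹ ∈ S := by rw [hSmem]; tauto
  have hbS : b ∈ S := by rw [hSmem]; tauto
  have hadj : ∀ u v : Bool × H, (haarGraph S).Adj u v ↔
      ((u.1 = false ∧ v.1 = true ∧ v.2 * u.2⁻¹ ∈ S) ∨
       (u.1 = true ∧ v.1 = false ∧ u.2 * v.2⁻¹ ∈ S)) := fun u v => Iff.rfl
  have hadj01 : ∀ x y : H, (haarGraph S).Adj (false, x) (true, y) ↔ y * x⁻¹ ∈ S := by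
    intro x y
    rw [hadj]
    simp
  have hadj10 : ∀ x y : H, (haarGraph S).Adj (true, y) (false, x) ↔ y * x⁻¹ ∈ S := by
    intro x y
    rw [hadj]
    simp
  have hadjgen0 : ∀ (x : H) (w : Bool × H), (haarGraph S).Adj (false, x) w →
      w = (true, w.2) ∧ w.2 * x⁻¹ ∈ S := by
    intro x w hw
    rcases (hadj _ _).mp hw with ⟨_, h2, h3⟩ | ⟨h1, _, _⟩
    · refine ⟨?_, h3⟩
      rw [← h2]
    · simp at h1
  have hadjgen1 : ∀ (y : H) (w : Bool × H), (haarGraph S).Adj (true, y) w →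
      w = (false, w.2) ∧ y * w.2⁻¹ ∈ S := by
    intro y w hw
    rcases (hadj _ _).mp hw with ⟨h1, _, _⟩ | ⟨_, h2, h3⟩
    · simp at h1
    · refine ⟨?_, h3⟩
      rw [← h2]
  have hSolve : ∀ y x : H, y * x⁻¹ ∈ S → (y = x ∨ y = a * x ∨ y = a⁻¹ * x ∨ y = b * x) := by
    intro y x hy
    rcases (hSmem _).mp hy with h | h | h | h
    · left; rw [mul_inv_eq_iff_eq_mul] at h; rw [h, one_mul]
    · right; left; rw [mul_inv_eq_iff_eq_mul] at h; exact h
    · right; right; left; rw [mul_inv_eq_iff_eq_mul] at h; exact h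
    · right; right; right; rw [mul_inv_eq_iff_eq_mul] at h; exact h
  have hSolve' : ∀ w z : H, z * w⁻¹ ∈ S → (w = z ∨ w = a⁻¹ * z ∨ w = a * z ∨ w = b⁻¹ * z) := by
    intro w z hw
    rcases (hSmem _).mp hw with h | h | h | h
    · left
      have h2 : z = 1 * w := by rw [← h]; group
      rw [h2, one_mul]
    · right; left
      have h2 : w = a⁻¹ * z := by rw [← h]; group
      exact h2
    · right; right; left
      have h2 : w * z⁻¹ = (z * w⁻¹)⁻¹ := by group
      rw [h, inv_inv] at h2
      have h3 : w = a * z := by rw [← h2]; group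
      exact h3
    · right; right; right
      have h2 : w = b⁻¹ * z := by rw [← h]; group
      exact h2
  -- the two-common-neighbours relation
  set Rel : (Bool × H) → (Bool × H) → Prop := fun u v => u ≠ v ∧
      ∃ w w' : Bool × H, w ≠ w' ∧ (haarGraph S).Adj u w ∧ (haarGraph S).Adj v w ∧
        (haarGraph S).Adj u w' ∧ (haarGraph S).Adj v w' with hReldef
  have hRelMapF : ∀ (g : haarGraph S ≃g haarGraph S) (u v : Bool × H),
      Rel u v → Rel (g u) (g v) := by
    intro g u v ⟨hne, w, w', hww, h1, h2, h3, h4⟩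
    refine ⟨fun h => hne (g.injective h), g w, g w', fun h => hww (g.injective h),
      g.map_adj_iff.mpr h1, g.map_adj_iff.mpr h2, g.map_adj_iff.mpr h3, g.map_adj_iff.mpr h4⟩
  have hRelIff : ∀ u v : Bool × H, Rel u v ↔ Rel (f u) (f v) := by
    intro u v
    constructor
    · exact hRelMapF f u v
    · intro h
      have := hRelMapF f.symm _ _ h
      simpa using this
  -- characterisation of Rel on each side
  have L1fwd : ∀ x x' : H, Rel (false, x) (false, x') →
      x' * x⁻¹ = a ∨ x' * x⁻¹ = a⁻¹ := by
    intro x x' ⟨hne, w, w', hww, h1, h2, h3, h4⟩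
    obtain ⟨hw, hs1⟩ := hadjgen0 x w h1
    obtain ⟨_, hs2⟩ := hadjgen0 x' w h2
    obtain ⟨hw', hs3⟩ := hadjgen0 x w' h3
    obtain ⟨_, hs4⟩ := hadjgen0 x' w' h4
    have hxx : x ≠ x' := fun h => hne (by rw [h])
    have hyy : w.2 ≠ w'.2 := by
      intro h
      apply hww
      rw [hw, hw', h]
    have hne12 : w.2 * x⁻¹ ≠ w.2 * x'⁻¹ := by
      intro h
      exact hxx (inv_injective (mul_left_cancel h))
    have hne13 : w.2 * x⁻¹ ≠ w'.2 * x⁻¹ := by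
      intro h
      exact hyy (mul_right_cancel h)
    have heq : (w.2 * x'⁻¹)⁻¹ * (w.2 * x⁻¹) = (w'.2 * x'⁻¹)⁻¹ * (w'.2 * x⁻¹) := by group
    have hconc := aux_keyL a b p r horda hp5 hbN hb2N hbam
      (w.2 * x⁻¹) (w.2 * x'⁻¹) (w'.2 * x⁻¹) (w'.2 * x'⁻¹)
      (hSkey _ hs1) (hSkey _ hs2) (hSkey _ hs3) (hSkey _ hs4) hne12 hne13 heq
    have hval : (w.2 * x'⁻¹)⁻¹ * (w.2 * x⁻¹) = x' * x⁻¹ := by group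
    rw [hval] at hconc
    exact hconc
  have L2fwd : ∀ y y' : H, Rel (true, y) (true, y') →
      y' * y⁻¹ = a ∨ y' * y⁻¹ = a⁻¹ := by
    intro y y' ⟨hne, w, w', hww, h1, h2, h3, h4⟩
    obtain ⟨hw, hs1⟩ := hadjgen1 y w h1
    obtain ⟨_, hs2⟩ := hadjgen1 y' w h2
    obtain ⟨hw', hs3⟩ := hadjgen1 y w' h3
    obtain ⟨_, hs4⟩ := hadjgen1 y' w' h4
    have hyy : y ≠ y' := fun h => hne (by rw [h])
    have hzz : w.2 ≠ w'.2 := by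
      intro h
      apply hww
      rw [hw, hw', h]
    have hne12 : y * w.2⁻¹ ≠ y' * w.2⁻¹ := by
      intro h
      exact hyy (mul_right_cancel h)
    have hne13 : y * w.2⁻¹ ≠ y * w'.2⁻¹ := by
      intro h
      exact hzz (inv_injective (mul_left_cancel h))
    have heq : (y' * w.2⁻¹) * (y * w.2⁻¹)⁻¹ = (y' * w'.2⁻¹) * (y * w'.2⁻¹)⁻¹ := by group
    have hconc := aux_keyR a b p r horda hp5 hbN hb2N hbam
      (y * w.2⁻¹) (y' * w.2⁻¹) (y * w'.2⁻¹) (y' * w'.2⁻¹)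
      (hSkey _ hs1) (hSkey _ hs2) (hSkey _ hs3) (hSkey _ hs4) hne12 hne13 heq
    have hval : (y' * w.2⁻¹) * (y * w.2⁻¹)⁻¹ = y' * y⁻¹ := by group
    rw [hval] at hconc
    exact hconc
  have hax : ∀ x : H, a * x ≠ x := by
    intro x h
    exact ha1 (mul_right_cancel (by rw [one_mul]; exact h))
  have L1bwd : ∀ x : H, Rel (false, x) (false, a * x) := by
    intro x
    refine ⟨?_, (true, a * x), (true, x), ?_, ?_, ?_, ?_, ?_⟩
    · intro h
      exact hax x (congrArg Prod.snd h).symm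
    · intro h
      exact hax x (congrArg Prod.snd h)
    · rw [hadj01]
      have h2 : (a * x) * x⁻¹ = a := by group
      rw [h2]; exact haS
    · rw [hadj01]
      have h2 : (a * x) * (a * x)⁻¹ = 1 := by group
      rw [h2]; exact h1S
    · rw [hadj01]
      have h2 : x * x⁻¹ = 1 := by group
      rw [h2]; exact h1S
    · rw [hadj01]
      have h2 : x * (a * x)⁻¹ = a⁻¹ := by group
      rw [h2]; exact haiS
  have L2bwd : ∀ y : H, Rel (true, y) (true, a * y) := by
    intro y
    refine ⟨?_, (false, y), (false, a * y), ?_, ?_, ?_, ?_, ?_⟩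
    · intro h
      exact hax y (congrArg Prod.snd h).symm
    · intro h
      exact hax y (congrArg Prod.snd h).symm
    · rw [hadj10]
      have h2 : y * y⁻¹ = 1 := by group
      rw [h2]; exact h1S
    · rw [hadj10]
      have h2 : (a * y) * y⁻¹ = a := by group
      rw [h2]; exact haS
    · rw [hadj10]
      have h2 : y * (a * y)⁻¹ = a⁻¹ := by group
      rw [h2]; exact haiS
    · rw [hadj10]
      have h2 : (a * y) * (a * y)⁻¹ = 1 := by group
      rw [h2]; exact h1S
  -- reachability
  let traMap : H → (haarGraph S →g haarGraph S) := fun g =>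
    ⟨fun v => (v.1, v.2 * g), by
      intro u v huv
      rcases (hadj _ _).mp huv with ⟨h1, h2, h3⟩ | ⟨h1, h2, h3⟩
      · apply (hadj _ _).mpr
        left
        refine ⟨h1, h2, ?_⟩
        have h4 : (v.2 * g) * (u.2 * g)⁻¹ = v.2 * u.2⁻¹ := by group
        rw [h4]; exact h3
      · apply (hadj _ _).mpr
        right
        refine ⟨h1, h2, ?_⟩
        have h4 : (u.2 * g) * (v.2 * g)⁻¹ = u.2 * v.2⁻¹ := by group
        rw [h4]; exact h3⟩
  have htra : ∀ (g : H) (i : Bool) (x : H), (traMap g) (i, x) = (i, x * g) := fun g i x => rfl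
  have hreach0 : ∀ h : H, (haarGraph S).Reachable (false, 1) (false, h) := by
    have base : ∀ s : H, s ∈ S → (haarGraph S).Reachable (false, (1 : H)) (false, s) := by
      intro s hs
      have e1 : (haarGraph S).Adj (false, (1 : H)) (true, s) := by
        rw [hadj01]; simpa using hs
      have e2 : (haarGraph S).Adj (true, s) (false, s) := by
        rw [hadj10]
        have h2 : s * s⁻¹ = 1 := by group
        rw [h2]; exact h1S
      exact e1.reachable.trans e2.reachable
    intro h
    have hmem : h ∈ Subgroup.closure ({a, b} : Set H) := by rw [htop]; trivial
    induction hmem using Subgroup.closure_induction with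
    | mem z hz =>
      rcases hz with rfl | rfl
      · exact base _ haS
      · exact base _ hbS
    | one => exact SimpleGraph.Reachable.refl _
    | mul u v hu hv ihu ihv =>
      have h2 := SimpleGraph.Reachable.map (traMap v) ihu
      rw [htra, htra, one_mul] at h2
      exact ihv.trans h2
    | inv u hu ihu =>
      have h2 := SimpleGraph.Reachable.map (traMap u⁻¹) ihu
      rw [htra, htra, one_mul, mul_inv_cancel] at h2
      exact h2.symm
  have hreach : ∀ v : Bool × H, (haarGraph S).Reachable (false, 1) v := by
    intro v
    obtain ⟨i, h⟩ := v
    cases i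
    · exact hreach0 h
    · refine (hreach0 h).trans ?_
      have e1 : (haarGraph S).Adj (false, h) (true, h) := by
        rw [hadj01]
        have h2 : h * h⁻¹ = 1 := by group
        rw [h2]; exact h1S
      exact e1.reachable
  -- parity propagation
  have hstepBool : ∀ u v : Bool × H, (haarGraph S).Adj u v →
      (((f u).1 = u.1) ↔ ((f v).1 = v.1)) := by
    intro u v huv
    have hne1 : u.1 ≠ v.1 := by
      rcases (hadj _ _).mp huv with ⟨h1, h2, _⟩ | ⟨h1, h2, _⟩ <;> rw [h1, h2] <;> simp
    have hne2 : (f u).1 ≠ (f v).1 := by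
      have hadjf : (haarGraph S).Adj (f u) (f v) := f.map_adj_iff.mpr huv
      rcases (hadj _ _).mp hadjf with ⟨h1, h2, _⟩ | ⟨h1, h2, _⟩ <;> rw [h1, h2] <;> simp
    have hiff : ∀ x y z w : Bool, x ≠ y → z ≠ w → ((z = x) ↔ (w = y)) := by decide
    exact hiff u.1 v.1 (f u).1 (f v).1 hne1 hne2
  have hconst : ∀ u v : Bool × H, (haarGraph S).Reachable u v →
      (((f u).1 = u.1) ↔ ((f v).1 = v.1)) := by
    intro u v huv
    obtain ⟨w⟩ := huv
    induction w with
    | nil => exact Iff.rfl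
    | cons hadj' _ ih => exact (hstepBool _ _ hadj').trans ih
  by_cases hbase : (f ((false, 1) : Bool × H)).1 = false
  · intro v
    exact (hconst (false, 1) v (hreach v)).mp hbase
  · exfalso
    have hflipbool : ∀ x y : Bool, ¬(x = y) → x = !y := by decide
    have hflip : ∀ u : Bool × H, (f u).1 = !u.1 := by
      intro u
      apply hflipbool
      intro h
      exact hbase ((hconst (false, 1) u (hreach u)).mpr h)
    -- the two components of f in the flipped case
    set α : H → H := fun x => (f (false, x)).2 with hαdef
    set β : H → H := fun y => (f (true, y)).2 with hβdef
    have hfα : ∀ x : H, f (false, x) = (true, α x) := by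
      intro x
      have h1 : (f ((false, x) : Bool × H)).1 = true := by simp [hflip]
      rw [← h1]
    have hfβ : ∀ y : H, f (true, y) = (false, β y) := by
      intro y
      have h1 : (f ((true, y) : Bool × H)).1 = false := by simp [hflip]
      rw [← h1]
    have hβinj : Function.Injective β := by
      intro y y' h
      have h1 : f (true, y) = f (true, y') := by rw [hfβ, hfβ, h]
      have h2 := f.injective h1
      exact congrArg Prod.snd h2
    -- single-step dichotomies
    have hFactB : ∀ y : H, β (a * y) = a * β y ∨ β (a * y) = a⁻¹ * β y := by
      intro y
      have h1 := hRelMapF f _ _ (L2bwd y)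
      rw [hfβ, hfβ] at h1
      rcases L1fwd _ _ h1 with h | h
      · left; rw [mul_inv_eq_iff_eq_mul] at h; exact h
      · right; rw [mul_inv_eq_iff_eq_mul] at h; exact h
    have hFactA : ∀ x : H, α (a * x) = a * α x ∨ α (a * x) = a⁻¹ * α x := by
      intro x
      have h1 := hRelMapF f _ _ (L1bwd x)
      rw [hfα, hfα] at h1
      rcases L2fwd _ _ h1 with h | h
      · left; rw [mul_inv_eq_iff_eq_mul] at h; exact h
      · right; rw [mul_inv_eq_iff_eq_mul] at h; exact h
    -- contradiction helpers
    have ha2ne : ∀ e : ℤ, (e = 1 ∨ e = -1) → a ^ e ≠ 1 := by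
      intro e he h
      have h1 : a ^ e = a ^ (0 : ℤ) := by rw [zpow_zero]; exact h
      rw [hdvd_iff] at h1
      refine aux_dvd_small' p hp5 _ h1 (by omega) (by omega) (by omega)
    have hkill1 : ∀ (e j : ℤ) (w : H), a ^ e * (b⁻¹ * w) = a ^ j * w → False := by
      intro e j w h
      rw [← mul_assoc] at h
      have h1 : a ^ e * b⁻¹ = a ^ j := mul_right_cancel h
      have h2 : b = (a ^ j)⁻¹ * a ^ e := by rw [← h1]; group
      rw [← zpow_neg, ← zpow_add] at h2
      exact hbN _ h2
    have hkill2 : ∀ (e : ℤ) (w : H), (e = 1 ∨ e = -1) → a ^ e * (b⁻¹ * w) = b⁻¹ * w → False := by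
      intro e w he h
      have h1 : a ^ e * (b⁻¹ * w) = 1 * (b⁻¹ * w) := by rw [one_mul]; exact h
      exact ha2ne e he (mul_right_cancel h1)
    -- images of neighbours of (false, x)
    have hnbhd : ∀ x y'' : H, (haarGraph S).Adj (false, x) (true, y'') →
        (β y'' = α x ∨ β y'' = a⁻¹ * α x ∨ β y'' = a * α x ∨ β y'' = b⁻¹ * α x) := by
      intro x y'' hadjxy
      have h1 : (haarGraph S).Adj (f (false, x)) (f (true, y'')) := f.map_adj_iff.mpr hadjxy
      rw [hfα, hfβ] at h1
      exact hSolve' _ _ ((hadj10 _ _).mp h1)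
    have hadjxax : ∀ x : H, (haarGraph S).Adj (false, x) (true, a * x) := by
      intro x
      rw [hadj01]
      have h2 : (a * x) * x⁻¹ = a := by group
      rw [h2]; exact haS
    have hadjxx : ∀ x : H, (haarGraph S).Adj (false, x) (true, x) := by
      intro x
      rw [hadj01]
      have h2 : x * x⁻¹ = 1 := by group
      rw [h2]; exact h1S
    -- Fact C : the b-neighbour is preserved
    have hFactC : ∀ x : H, β (b * x) = b⁻¹ * α x := by
      intro x
      have hcrush : ∀ w : H, (w = a * (b⁻¹ * α x) ∨ w = a⁻¹ * (b⁻¹ * α x)) →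
          (w = α x ∨ w = a⁻¹ * α x ∨ w = a * α x ∨ w = b⁻¹ * α x) → False := by
        intro w hw hmem
        have hw' : ∃ e : ℤ, (e = 1 ∨ e = -1) ∧ w = a ^ e * (b⁻¹ * α x) := by
          rcases hw with h | h
          · exact ⟨1, Or.inl rfl, by rw [h, zpow_one]⟩
          · exact ⟨-1, Or.inr rfl, by rw [h, zpow_neg, zpow_one]⟩
        obtain ⟨e, he, rfl⟩ := hw'
        rcases hmem with h | h | h | h
        · exact hkill1 e 0 (α x) (by rw [zpow_zero, one_mul]; exact h)
        · exact hkill1 e (-1) (α x) (by rw [zpow_neg, zpow_one]; exact h)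
        · exact hkill1 e 1 (α x) (by rw [zpow_one]; exact h)
        · exact hkill2 e _ he h
      have hadjz : (haarGraph S).Adj (false, b⁻¹ * α x) (true, α x) := by
        rw [hadj01]
        have h2 : α x * (b⁻¹ * α x)⁻¹ = b := by group
        rw [h2]; exact hbS
      have hsymmadj : (haarGraph S).Adj (f.symm (false, b⁻¹ * α x)) (f.symm (true, α x)) :=
        f.symm.map_adj_iff.mpr hadjz
      have hfsx : f.symm (true, α x) = (false, x) := by
        rw [← hfα x]
        simp
      rw [hfsx] at hsymmadj
      set y' : H := (f.symm ((false, b⁻¹ * α x) : Bool × H)).2 with hy'def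
      have hsymflip : (f.symm ((false, b⁻¹ * α x) : Bool × H)).1 = true := by
        have h3 := hflip (f.symm ((false, b⁻¹ * α x) : Bool × H))
        rw [RelIso.apply_symm_apply] at h3
        have hback : ∀ z : Bool, (false : Bool) = !z → z = true := by decide
        exact hback _ h3
      have hu : f.symm ((false, b⁻¹ * α x) : Bool × H) = (true, y') := by
        rw [← hsymflip]
      rw [hu] at hsymmadj
      have hadjxy : (haarGraph S).Adj (false, x) (true, y') := hsymmadj.symm
      have hβy' : β y' = b⁻¹ * α x := by
        have h4 : f (true, y') = (false, b⁻¹ * α x) := by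
          rw [← hu]
          simp
        rw [hfβ] at h4
        exact congrArg Prod.snd h4
      rcases hSolve _ _ ((hadj01 _ _).mp hadjxy) with h5 | h5 | h5 | h5
      · -- y' = x
        exfalso
        rw [h5] at hβy'
        have h6 := hFactB x
        rw [hβy'] at h6
        exact hcrush _ h6 (hnbhd x (a * x) (hadjxax x))
      · -- y' = a * x
        exfalso
        rw [h5] at hβy'
        have h6 := hFactB x
        have h8 : β x = a * (b⁻¹ * α x) ∨ β x = a⁻¹ * (b⁻¹ * α x) := by
          rcases h6 with h | h
          · right
            rw [hβy'] at h
            rw [h]; group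
          · left
            rw [hβy'] at h
            rw [h]; group
        exact hcrush _ h8 (hnbhd x x (hadjxx x))
      · -- y' = a⁻¹ * x
        exfalso
        rw [h5] at hβy'
        have h6 := hFactB (a⁻¹ * x)
        have ha_inv : a * (a⁻¹ * x) = x := by group
        rw [ha_inv, hβy'] at h6
        exact hcrush _ h6 (hnbhd x x (hadjxx x))
      · rw [← h5]
        exact hβy'
    -- linearisation of β along a-powers
    obtain ⟨e₂, he₂, hβpow⟩ := aux_pow_lin a p horda hp5 β hβinj hFactB (b * 1)
    obtain ⟨e₁, he₁, hstep1⟩ : ∃ e₁ : ℤ, (e₁ = 1 ∨ e₁ = -1) ∧ α (a * 1) = a ^ e₁ * α 1 := by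
      rcases hFactA 1 with h | h
      · exact ⟨1, Or.inl rfl, by rw [zpow_one]; exact h⟩
      · exact ⟨-1, Or.inr rfl, by rw [zpow_neg, zpow_one]; exact h⟩
    have hC1 : β (b * (a * 1)) = b⁻¹ * α (a * 1) := hFactC (a * 1)
    have hC0 : β (b * 1) = b⁻¹ * α 1 := hFactC 1
    have hmove : b * (a * 1) = a ^ r * (b * 1) := by
      have h1 := hbam 1
      rw [zpow_one, mul_one] at h1
      calc b * (a * 1) = (b * a) * 1 := by rw [mul_assoc]
        _ = (a ^ r * b) * 1 := by rw [h1]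
        _ = a ^ r * (b * 1) := by rw [mul_assoc]
    have heqn : b⁻¹ * (a ^ e₁ * α 1) = a ^ (e₂ * r) * (b⁻¹ * α 1) := by
      calc b⁻¹ * (a ^ e₁ * α 1) = b⁻¹ * α (a * 1) := by rw [hstep1]
        _ = β (b * (a * 1)) := hC1.symm
        _ = β (a ^ r * (b * 1)) := by rw [hmove]
        _ = a ^ (e₂ * r) * β (b * 1) := hβpow r
        _ = a ^ (e₂ * r) * (b⁻¹ * α 1) := by rw [hC0]
    have heqn2 : b⁻¹ * a ^ e₁ = a ^ (e₂ * r) * b⁻¹ := by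
      have h9 : (b⁻¹ * a ^ e₁) * α 1 = (a ^ (e₂ * r) * b⁻¹) * α 1 := by
        rw [mul_assoc, mul_assoc]; exact heqn
      exact mul_right_cancel h9
    have heqn3 : a ^ e₁ = a ^ (r * (e₂ * r)) := by
      have h10 : a ^ e₁ = b * (a ^ (e₂ * r) * b⁻¹) := by rw [← heqn2]; group
      rw [← mul_assoc, hbam (e₂ * r)] at h10
      rw [h10]; group
    rw [hdvd_iff] at heqn3
    exact hrr e₁ e₂ he₁ he₂ heqn3


theorem haar_aut_preserves_bipartition_n_eq_one
    {H : Type*} [Group H] [Finite H] (p q : ℕ) (hp : p.Prime) (hq : q.Prime)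
    (hpq : p ≠ q) (hq2 : 2 < q)
    (hIA : IsInnerAbelian H)
    (P : Sylow p H) (hPnorm : (P : Subgroup H).Normal)
    (hPcard : Nat.card (P : Subgroup H) = p)
    (b : H) (Q : Sylow q H) (hQ : (Q : Subgroup H) = Subgroup.zpowers b)
    (hHPQ : (P : Subgroup H) ⊔ Subgroup.zpowers b = ⊤)
    (a : H) (haP : a ∈ (P : Subgroup H)) (ha1 : a ≠ 1)
    (f : haarGraph ({1, a, a⁻¹, b} : Set H) ≃g haarGraph ({1, a, a⁻¹, b} : Set H)) :
    ∀ v : Bool × H, (f v).1 = v.1 := by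
  -- order of a
  have horda : orderOf a = p := by
    have h1 : orderOf (⟨a, haP⟩ : (P : Subgroup H)) ∣ Nat.card (P : Subgroup H) :=
      orderOf_dvd_natCard _
    rw [hPcard] at h1
    rw [← Subgroup.orderOf_coe (⟨a, haP⟩ : (P : Subgroup H))] at h1
    rcases (Nat.Prime.eq_one_or_self_of_dvd hp _ h1) with h | h
    · exact absurd (orderOf_eq_one_iff.mp h) ha1
    · exact h
  -- P = zpowers a
  have hN : (P : Subgroup H) = Subgroup.zpowers a := by
    symm
    apply Subgroup.eq_of_le_of_card_ge
    · exact (Subgroup.zpowers_le).mpr haP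
    · rw [hPcard, Nat.card_zpowers, horda]
  -- generation
  have htop : Subgroup.closure ({a, b} : Set H) = ⊤ := by
    rw [← hHPQ, hN, Set.insert_eq, Subgroup.closure_union,
      ← Subgroup.zpowers_eq_closure, ← Subgroup.zpowers_eq_closure]
  -- commuting a b gives a contradiction
  have comm_ab_false : a * b = b * a → False := by
    intro hab
    apply hIA.1
    have h1 : ∀ x, x ∈ Subgroup.closure ({a, b} : Set H) → Commute a x ∧ Commute b x := by
      intro x hx
      induction hx using Subgroup.closure_induction with
      | mem z hz =>
        rcases hz with rfl | rfl
        · exact ⟨Commute.refl _, (Commute.symm hab)⟩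
        · exact ⟨hab, Commute.refl _⟩
      | one => exact ⟨Commute.one_right _, Commute.one_right _⟩
      | mul u v hu hv ihu ihv =>
        exact ⟨ihu.1.mul_right ihv.1, ihu.2.mul_right ihv.2⟩
      | inv u hu ihu => exact ⟨ihu.1.inv_right, ihu.2.inv_right⟩
    intro x y
    have hy : y ∈ Subgroup.closure ({a, b} : Set H) := by rw [htop]; trivial
    have hx : x ∈ Subgroup.closure ({a, b} : Set H) := by rw [htop]; trivial
    have : Commute x y := by
      induction hx using Subgroup.closure_induction with
      | mem z hz =>
        rcases hz with rfl | rfl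
        · exact (h1 y hy).1
        · exact (h1 y hy).2
      | one => exact Commute.one_left _
      | mul u v hu hv ihu ihv => exact ihu.mul_left ihv
      | inv u hu ihu => exact ihu.inv_left
    exact this
  have hb1 : b ≠ 1 := by
    intro h
    apply comm_ab_false
    rw [h, mul_one, one_mul]
  -- b is a q-element
  obtain ⟨k, hbqk⟩ : ∃ k : ℕ, b ^ q ^ k = 1 := by
    have hbQ : b ∈ (Q : Subgroup H) := by rw [hQ]; exact Subgroup.mem_zpowers b
    obtain ⟨k, hk⟩ := Q.isPGroup' ⟨b, hbQ⟩
    refine ⟨k, ?_⟩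
    have := congrArg ((Q : Subgroup H).subtype) hk
    simpa using this
  have hordb : orderOf b ∣ q ^ k := orderOf_dvd_of_pow_eq_one hbqk
  -- a-power facts
  have hap1 : a ^ (p : ℤ) = 1 := by
    rw [zpow_natCast, ← horda, pow_orderOf_eq_one]
  have hapow : ∀ j : ℤ, (a ^ j) ^ p = 1 := by
    intro j
    have : ((a ^ j) ^ p : H) = a ^ (j * p) := by
      rw [← zpow_natCast (a ^ j) p, ← zpow_mul]
    rw [this, mul_comm, zpow_mul, hap1, one_zpow]
  have hcop : Nat.Coprime p (q ^ k) :=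
    Nat.Coprime.pow_right k ((Nat.coprime_primes hp hq).mpr hpq)
  have hbN : ∀ j : ℤ, b ≠ a ^ j := by
    intro j h
    apply hb1
    have h1 : b ^ p = 1 := by rw [h]; exact hapow j
    have h2 : orderOf b ∣ p := orderOf_dvd_of_pow_eq_one h1
    have h3 : orderOf b ∣ Nat.gcd p (q ^ k) := Nat.dvd_gcd h2 hordb
    rw [hcop] at h3
    exact orderOf_eq_one_iff.mp (Nat.eq_one_of_dvd_one h3)
  have hcop2 : Nat.Coprime (2 * p) (q ^ k) := by
    apply Nat.Coprime.pow_right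
    apply Nat.Coprime.mul
    · exact (Nat.coprime_primes Nat.prime_two hq).mpr (by omega)
    · exact (Nat.coprime_primes hp hq).mpr hpq
  have hb2N : ∀ j : ℤ, b * b ≠ a ^ j := by
    intro j h
    apply hb1
    have h1 : b ^ (2 * p) = 1 := by
      rw [pow_mul, pow_two, h]; exact hapow j
    have h2 : orderOf b ∣ 2 * p := orderOf_dvd_of_pow_eq_one h1
    have h3 : orderOf b ∣ Nat.gcd (2 * p) (q ^ k) := Nat.dvd_gcd h2 hordb
    rw [hcop2] at h3
    exact orderOf_eq_one_iff.mp (Nat.eq_one_of_dvd_one h3)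
  -- the conjugation exponent r
  obtain ⟨r, hr⟩ : ∃ r : ℤ, a ^ r = b * a * b⁻¹ := by
    have := hPnorm.conj_mem a haP b
    rw [hN, Subgroup.mem_zpowers_iff] at this
    exact this
  have hbam : ∀ m : ℤ, b * a ^ m = a ^ (r * m) * b := by
    intro m
    have h1 : b * a ^ m * b⁻¹ = (b * a * b⁻¹) ^ m := by
      rw [conj_zpow]
    rw [← hr, ← zpow_mul] at h1
    rw [← h1]; group
  have har : a ^ r ≠ a := by
    intro h
    apply comm_ab_false
    rw [h] at hr
    have hr' : b * a * b⁻¹ = a := hr.symm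
    rw [mul_inv_eq_iff_eq_mul] at hr'
    exact hr'.symm
  -- conjugation power formula
  have conj_pow_nat : ∀ n : ℕ, b ^ n * a * (b ^ n)⁻¹ = a ^ ((r ^ n : ℤ)) := by
    intro n
    induction n with
    | zero => simp
    | succ m ih =>
      have h1 : b ^ (m + 1) * a * (b ^ (m + 1))⁻¹ = b * (b ^ m * a * (b ^ m)⁻¹) * b⁻¹ := by
        rw [pow_succ']; group
      rw [h1, ih, hbam (r ^ m)]
      have h3 : (r ^ (m + 1) : ℤ) = r * r ^ m := by ring
      rw [h3]
      group
  haveI : Fact p.Prime := ⟨hp⟩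
  set ρ : ZMod p := ((r : ℤ) : ZMod p) with hρdef
  have hdvd_iff : ∀ m n : ℤ, a ^ m = a ^ n ↔ (p : ℤ) ∣ m - n := aux_zpow_inj' a p horda
  have hρN : ρ ^ (q ^ k) = 1 := by
    have h1 : b ^ (q ^ k) * a * (b ^ (q ^ k))⁻¹ = a ^ ((r ^ (q ^ k) : ℤ)) := conj_pow_nat _
    rw [hbqk] at h1
    simp only [one_mul, inv_one, mul_one] at h1
    have h2 : a ^ (1 : ℤ) = a ^ ((r ^ (q ^ k) : ℤ)) := by rw [zpow_one]; exact h1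
    rw [hdvd_iff] at h2
    have h3 : ((1 - r ^ (q ^ k) : ℤ) : ZMod p) = 0 :=
      (ZMod.intCast_zmod_eq_zero_iff_dvd _ p).mpr h2
    push_cast at h3
    have : (1 : ZMod p) - ρ ^ (q ^ k) = 0 := by rw [hρdef]; exact_mod_cast h3
    linear_combination -this
  have hρ1 : ρ ≠ 1 := by
    intro h
    apply har
    have h2 : ((r - 1 : ℤ) : ZMod p) = 0 := by push_cast; rw [← hρdef, h]; ring
    rw [ZMod.intCast_zmod_eq_zero_iff_dvd] at h2
    have : a ^ r = a ^ (1 : ℤ) := by rw [hdvd_iff]; exact h2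
    rw [zpow_one] at this; exact this
  have hqk0 : q ^ k ≠ 0 := pow_ne_zero k (by omega)
  have hρ0 : ρ ≠ 0 := by
    intro h
    rw [h, zero_pow hqk0] at hρN
    exact zero_ne_one hρN
  have hoddqk : ¬ (2 ∣ q ^ k) := by
    intro h
    have h2 : (2 : ℕ).Prime := Nat.prime_two
    have := (Nat.Prime.dvd_of_dvd_pow h2 h)
    rcases (Nat.prime_dvd_prime_iff_eq h2 hq).mp this with rfl
    omega
  have hρorddvd : orderOf ρ ∣ q ^ k := orderOf_dvd_of_pow_eq_one hρN
  have hρsq : ρ ^ 2 ≠ 1 := by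
    intro h
    have h1 : orderOf ρ ∣ 2 := orderOf_dvd_of_pow_eq_one h
    rcases (Nat.Prime.eq_one_or_self_of_dvd Nat.prime_two _ h1) with h2 | h2
    · exact hρ1 (orderOf_eq_one_iff.mp h2)
    · exact hoddqk (h2 ▸ hρorddvd)
  have hρsq2 : ρ ^ 2 ≠ -1 := by
    intro h
    have h1 : ρ ^ 4 = 1 := by
      have : ρ ^ 4 = (ρ ^ 2) ^ 2 := by ring
      rw [this, h]; ring
    have h2 : orderOf ρ ∣ 4 := orderOf_dvd_of_pow_eq_one h1
    have h3 : ¬ 2 ∣ orderOf ρ := fun hd => hoddqk (hd.trans hρorddvd)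
    have h4 : Nat.Coprime (orderOf ρ) 4 := by
      have hc2 : Nat.Coprime (orderOf ρ) 2 :=
        (Nat.coprime_comm.mp ((Nat.Prime.coprime_iff_not_dvd Nat.prime_two).mpr h3))
      have : Nat.Coprime (orderOf ρ) (2 ^ 2) := Nat.Coprime.pow_right 2 hc2
      norm_num at this
      exact this
    have h5 : orderOf ρ = 1 := Nat.eq_one_of_dvd_coprimes h4 dvd_rfl h2
    exact hρ1 (orderOf_eq_one_iff.mp h5)
  have hp5 : 5 ≤ p := by
    by_contra hlt
    push_neg at hlt
    have hge : 2 ≤ p := hp.two_le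
    interval_cases p
    · rcases zmod2_cases ρ with h | h
      · exact hρ0 h
      · exact hρ1 h
    · rcases zmod3_cases ρ with h | h | h
      · exact hρ0 h
      · exact hρ1 h
      · exact hρsq h
    · exact absurd hp (by norm_num)

  exact aux_main a b p r horda hp5 ha1 hbN hb2N hbam htop
    (by
      intro e1 e2 he1 he2 hdvd
      have h0 : ((e1 - r * (e2 * r) : ℤ) : ZMod p) = 0 :=
        (ZMod.intCast_zmod_eq_zero_iff_dvd _ p).mpr hdvd
      rcases he1 with rfl | rfl <;> rcases he2 with rfl | rfl
      · apply hρsq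
        push_cast at h0
        rw [hρdef]
        linear_combination -h0
      · apply hρsq2
        push_cast at h0
        rw [hρdef]
        linear_combination h0
      · apply hρsq2
        push_cast at h0
        rw [hρdef]
        linear_combination -h0
      · apply hρsq
        push_cast at h0
        rw [hρdef]
        linear_combination h0)
    _ rfl f
end

section
/- Let H be a finite group, let G be a subgroup of the symmetric group Sym(H) containing every right translation R(h): x ↦ xh (h ∈ H), and let G_1 be the stabilizer in G of the identity element 1 of H. If a subset S ⊆ H is invariant under G_1 (i.e., S is a union of G_1-orbits), then S^{-1} = {s^{-1} : s ∈ S} is also invariant under G_1. -/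
theorem transitivity_module_inv_closed
    {H : Type*} [Group H] [Finite H]
    (G : Subgroup (Equiv.Perm H))
    (hR : ∀ h : H, Equiv.mulRight h ∈ G)
    (S : Set H)
    (hS : ∀ g ∈ G, g 1 = 1 → ⇑g '' S = S) :
    ∀ g ∈ G, g 1 = 1 → ⇑g '' S⁻¹ = S⁻¹ := by
  have key : ∀ g ∈ G, g 1 = 1 → ∀ s : H, s⁻¹ ∈ S → (g s)⁻¹ ∈ S := by
    intro g hg hg1 s hs
    set k : Equiv.Perm H := (Equiv.mulRight (g s))⁻¹ * (g * Equiv.mulRight s) with hk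
    have hkG : k ∈ G := G.mul_mem (G.inv_mem (hR (g s))) (G.mul_mem hg (hR s))
    have hk1 : k 1 = 1 := by
      simp [hk, Equiv.Perm.mul_apply, mul_inv_cancel]
    have hkS := hS k hkG hk1
    have : k s⁻¹ ∈ S := by
      rw [← hkS]; exact Set.mem_image_of_mem _ hs
    simpa [hk, Equiv.Perm.mul_apply, hg1] using this
  intro g hg hg1
  apply Set.eq_of_subset_of_subset
  · rintro _ ⟨s, hs, rfl⟩
    exact Set.mem_inv.mpr (by simpa using key g hg hg1 s hs)
  · intro s hs
    have hginv1 : (g⁻¹ : Equiv.Perm H) 1 = 1 := by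
      nth_rewrite 1 [← hg1]; exact g.symm_apply_apply 1
    have : ((g⁻¹ : Equiv.Perm H) s)⁻¹ ∈ S := key g⁻¹ (G.inv_mem hg) hginv1 s hs
    exact ⟨(g⁻¹ : Equiv.Perm H) s, Set.mem_inv.mpr this, by simp [hg1]⟩
end

section
/- Let H be a finite group, let G be a subgroup of the symmetric group Sym(H) containing every right translation R(h): x ↦ xh (h ∈ H), and let G_1 be the stabilizer in G of the identity element 1 of H. If h ∈ H is fixed by every element of G_1 and S ⊆ H is a single G_1-orbit, then hS = {hs : s ∈ S} and Sh = {sh : s ∈ S} are also single G_1-orbits. -/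
theorem translate_of_orbit_is_orbit
    {H : Type*} [Group H] [Finite H]
    (G : Subgroup (Equiv.Perm H))
    (hR : ∀ h : H, Equiv.mulRight h ∈ G)
    (h : H) (hfix : ∀ g ∈ G, g 1 = 1 → g h = h)
    (S : Set H)
    (hS : ∃ x : H, S = {y : H | ∃ g ∈ G, g 1 = 1 ∧ g x = y}) :
    (∃ x : H, (fun s => h * s) '' S = {y : H | ∃ g ∈ G, g 1 = 1 ∧ g x = y}) ∧
    (∃ x : H, (fun s => s * h) '' S = {y : H | ∃ g ∈ G, g 1 = 1 ∧ g x = y}) := by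
  obtain ⟨x, rfl⟩ := hS
  -- Key fact: every element of the point stabilizer commutes with left
  -- translation by `h`.
  have key : ∀ g ∈ G, g 1 = 1 → ∀ y : H, g (h * y) = h * g y := by
    intro g hg hg1 y
    have hmem : (Equiv.mulRight (g y))⁻¹ * g * Equiv.mulRight y ∈ G :=
      mul_mem (mul_mem (inv_mem (hR _)) hg) (hR _)
    have h1 : ((Equiv.mulRight (g y))⁻¹ * g * Equiv.mulRight y) (1 : H) = 1 := by
      simp [Equiv.Perm.mul_apply]
    have := hfix _ hmem h1
    simp [Equiv.Perm.mul_apply] at this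
    calc g (h * y) = g (h * y) * (g y)⁻¹ * g y := by group
      _ = h * g y := by rw [this]
  -- `g` also fixes `h⁻¹`
  have keyinv : ∀ g ∈ G, g 1 = 1 → g h⁻¹ = h⁻¹ := by
    intro g hg hg1
    have := key g hg hg1 h⁻¹
    rw [mul_inv_cancel, hg1] at this
    exact (eq_inv_of_mul_eq_one_right this.symm)
  constructor
  · refine ⟨h * x, ?_⟩
    ext y
    simp only [Set.mem_image, Set.mem_setOf_eq]
    constructor
    · rintro ⟨s, ⟨g, hg, hg1, rfl⟩, rfl⟩
      exact ⟨g, hg, hg1, key g hg hg1 x⟩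
    · rintro ⟨g, hg, hg1, rfl⟩
      exact ⟨g x, ⟨g, hg, hg1, rfl⟩, (key g hg hg1 x).symm⟩
  · refine ⟨x * h, ?_⟩
    ext y
    simp only [Set.mem_image, Set.mem_setOf_eq]
    constructor
    · rintro ⟨s, ⟨g, hg, hg1, rfl⟩, rfl⟩
      refine ⟨Equiv.mulRight h * g * (Equiv.mulRight h)⁻¹,
        mul_mem (mul_mem (hR h) hg) (inv_mem (hR h)), ?_, ?_⟩
      · have : ((1 : H) * h⁻¹) = h⁻¹ := one_mul _
        simp [Equiv.Perm.mul_apply, keyinv g hg hg1]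
      · simp [Equiv.Perm.mul_apply]
    · rintro ⟨g, hg, hg1, rfl⟩
      refine ⟨((Equiv.mulRight h)⁻¹ * g * Equiv.mulRight h) x,
        ⟨(Equiv.mulRight h)⁻¹ * g * Equiv.mulRight h,
          mul_mem (mul_mem (inv_mem (hR h)) hg) (hR h), ?_, rfl⟩, ?_⟩
      · simp [Equiv.Perm.mul_apply, hfix g hg hg1]
      · simp [Equiv.Perm.mul_apply]
end

section
/- Let H be a finite group, let G be a subgroup of the symmetric group Sym(H) containing every right translation R(h): x ↦ xh (h ∈ H), and let G_1 be the stabilizer in G of the identity element 1 of H. If a subset S ⊆ H is invariant under G_1 (a union of G_1-orbits), then the subgroup ⟨S⟩ generated by S is a block of imprimitivity for the action of G on H; that is, for every g ∈ G, the image ⟨S⟩^g either equals ⟨S⟩ or is disjoint from ⟨S⟩. -/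
theorem closure_of_invariant_set_is_block
    {H : Type*} [Group H] [Finite H]
    (G : Subgroup (Equiv.Perm H))
    (hR : ∀ h : H, Equiv.mulRight h ∈ G)
    (S : Set H)
    (hS : ∀ g ∈ G, g 1 = 1 → ⇑g '' S = S) :
    ∀ g ∈ G, ⇑g '' (Subgroup.closure S : Set H) = (Subgroup.closure S : Set H) ∨
      Disjoint (⇑g '' (Subgroup.closure S : Set H)) (Subgroup.closure S : Set H) := by

  classical
  -- Key lemma: every element of G fixing 1 maps the closure into itself.
  have key : ∀ x ∈ Subgroup.closure S, ∀ g : Equiv.Perm H, g ∈ G → g 1 = 1 →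
      g x ∈ Subgroup.closure S := by
    intro x hx
    induction hx using Subgroup.closure_induction with
    | mem s hs =>
      intro g hg h1
      exact Subgroup.subset_closure ((hS g hg h1) ▸ Set.mem_image_of_mem (⇑g) hs)
    | one =>
      intro g hg h1
      rw [h1]; exact Subgroup.one_mem _
    | mul a b ha hb iha ihb =>
      intro g hg h1
      set g₁ := (Equiv.mulRight (g b))⁻¹ * g * (Equiv.mulRight b) with hg₁
      have hg₁G : g₁ ∈ G := G.mul_mem (G.mul_mem (G.inv_mem (hR (g b))) hg) (hR b)
      have hg₁1 : g₁ 1 = 1 := by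
        simp [hg₁, Equiv.Perm.mul_apply]
      have heq : g (a * b) = g₁ a * g b := by
        simp [hg₁, Equiv.Perm.mul_apply]
      rw [heq]
      exact Subgroup.mul_mem _ (iha g₁ hg₁G hg₁1) (ihb g hg h1)
    | inv a ha iha =>
      intro g hg h1
      set g₂ := (Equiv.mulRight (g a⁻¹))⁻¹ * g * (Equiv.mulRight a⁻¹) with hg₂
      have hg₂G : g₂ ∈ G := G.mul_mem (G.mul_mem (G.inv_mem (hR (g a⁻¹))) hg) (hR a⁻¹)
      have hg₂1 : g₂ 1 = 1 := by
        simp [hg₂, Equiv.Perm.mul_apply, h1]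
      have heq : g₂ a = (g a⁻¹)⁻¹ := by
        simp [hg₂, Equiv.Perm.mul_apply, h1]
      have := iha g₂ hg₂G hg₂1
      rw [heq] at this
      simpa using Subgroup.inv_mem _ this
  have fixim : ∀ g : Equiv.Perm H, g ∈ G → g 1 = 1 →
      ⇑g '' (Subgroup.closure S : Set H) = (Subgroup.closure S : Set H) := by
    intro g hg h1
    apply Set.Subset.antisymm
    · rintro _ ⟨x, hx, rfl⟩
      exact key x hx g hg h1
    · intro y hy
      have hinv : g⁻¹ 1 = 1 := by
        rw [← h1]; simpa using h1.symm
      refine ⟨g⁻¹ y, key y hy g⁻¹ (G.inv_mem hg) hinv, ?_⟩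
      simp
  intro g hg
  set h := g 1 with hh
  set g₁ := (Equiv.mulRight h)⁻¹ * g with hg₁
  have hg₁G : g₁ ∈ G := G.mul_mem (G.inv_mem (hR h)) hg
  have hg₁1 : g₁ 1 = 1 := by
    simp [hg₁, Equiv.Perm.mul_apply, ← hh]
  have hgx : ∀ x, g x = g₁ x * h := by
    intro x
    simp [hg₁, Equiv.Perm.mul_apply]
  have him : ⇑g '' (Subgroup.closure S : Set H) =
      (fun x => x * h) '' (Subgroup.closure S : Set H) := by
    have h2 : (fun x => x * h) '' (⇑g₁ '' (Subgroup.closure S : Set H)) =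
        ⇑g '' (Subgroup.closure S : Set H) := by
      rw [← Set.image_comp]
      exact Set.image_congr' (fun x => (hgx x).symm)
    rw [fixim g₁ hg₁G hg₁1] at h2
    exact h2.symm
  by_cases hK : h ∈ Subgroup.closure S
  · left
    rw [him]
    ext y
    simp only [Set.mem_image, SetLike.mem_coe]
    constructor
    · rintro ⟨x, hx, rfl⟩
      exact Subgroup.mul_mem _ hx hK
    · intro hy
      exact ⟨y * h⁻¹, Subgroup.mul_mem _ hy (Subgroup.inv_mem _ hK), by simp⟩
  · right
    rw [him, Set.disjoint_left]
    rintro _ ⟨x, hx, rfl⟩ hmem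
    exact hK (by simpa using Subgroup.mul_mem _ (Subgroup.inv_mem _ hx) hmem)
end

section
/- Let H be a finite group, let G be a subgroup of the symmetric group Sym(H) containing every right translation R(h): x ↦ xh (h ∈ H), and let G_1 be the stabilizer in G of the identity element 1 of H. If h ∈ H is fixed by every element of G_1, then the left translation L(h): x ↦ h^{-1}x commutes with every element of G; that is, L(h) lies in the centralizer of G in Sym(H). -/
theorem left_translation_centralizes
    {H : Type*} [Group H] [Finite H]
    (G : Subgroup (Equiv.Perm H))
    (hR : ∀ h : H, Equiv.mulRight h ∈ G)
    (h : H) (hfix : ∀ g ∈ G, g 1 = 1 → g h = h) :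
    ∀ g ∈ G, ∀ x : H, g (h⁻¹ * x) = h⁻¹ * g x := by
  intro g hg
  have key : ∀ x : H, g (h * x) = h * g x := by
    intro x
    have hmem : (Equiv.mulRight ((g x)⁻¹) * g * Equiv.mulRight x : Equiv.Perm H) ∈ G :=
      G.mul_mem (G.mul_mem (hR _) hg) (hR x)
    have h1 : (Equiv.mulRight ((g x)⁻¹) * g * Equiv.mulRight x : Equiv.Perm H) 1 = 1 := by
      simp
    have hh := hfix _ hmem h1
    simp only [Equiv.Perm.mul_apply, Equiv.coe_mulRight] at hh
    have := congrArg (· * g x) hh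
    simpa [mul_assoc] using this
  intro x
  have := key (h⁻¹ * x)
  rw [mul_inv_cancel_left] at this
  rw [this, inv_mul_cancel_left]
end

section
/- For every subset S of the quaternion group Q_8, the Haar graph H(Q_8, S) is a Cayley graph. -/
namespace QuatHaarAux

abbrev Q := QuaternionGroup 2

/-- Right translation on the second coordinate. -/
def ρ (g : QuaternionGroup 2) : Equiv.Perm (Bool × Q) where
  toFun v := (v.1, v.2 * g)
  invFun v := (v.1, v.2 * g⁻¹)
  left_inv v := by cases v; simp
  right_inv v := by cases v; simp

@[simp] lemma ρ_apply (g : QuaternionGroup 2) (v : Bool × Q) : ρ g v = (v.1, v.2 * g) := rfl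

section Good

variable (θ : Q → Q) (b : QuaternionGroup 2)
variable (hom : ∀ x y, θ (x * y) = θ x * θ y) (hb : θ b = b)
  (hq : ∀ x, θ (θ x) = b⁻¹ * x * b)

/-- The underlying function of the "swap" permutation. -/
def σf : Bool × Q → Bool × Q
  | (false, x) => (true, θ x)
  | (true, y) => (false, b * θ y)

include hom in
lemma θ_one : θ 1 = 1 := by
  have h1 : θ 1 * θ 1 = θ 1 * 1 := by rw [← hom, one_mul, mul_one]
  exact mul_left_cancel h1

include hom in
lemma θ_inv (x : QuaternionGroup 2) : θ x⁻¹ = (θ x)⁻¹ := by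
  have h1 : θ x⁻¹ * θ x = 1 := by rw [← hom, inv_mul_cancel, θ_one θ hom]
  exact eq_inv_of_mul_eq_one_left h1

include hom hb in
lemma θ_binv : θ b⁻¹ = b⁻¹ := by rw [θ_inv θ hom, hb]

/-- The "swap" permutation. -/
def σe : Equiv.Perm (Bool × Q) where
  toFun := σf θ b
  invFun v := σf θ b (v.1, v.2 * b⁻¹)
  left_inv := by
    rintro ⟨_ | _, x⟩ <;>
      simp only [σf, hom, hq, hb, θ_binv θ b hom hb] <;> group
  right_inv := by
    rintro ⟨_ | _, x⟩ <;>
      simp only [σf, hom, hq, hb, θ_binv θ b hom hb] <;> group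

/-- The "mixed" elements of the regular subgroup. -/
def P (h : QuaternionGroup 2) : Equiv.Perm (Bool × Q) :=
  (σe θ b hom hb hq).trans (ρ h)

lemma P_false (h : QuaternionGroup 2) (x : QuaternionGroup 2) : P θ b hom hb hq h (false, x) = (true, θ x * h) := rfl

lemma P_true (h : QuaternionGroup 2) (y : QuaternionGroup 2) : P θ b hom hb hq h (true, y) = (false, b * θ y * h) := rfl

lemma ρ_mul (g h : QuaternionGroup 2) : ρ g * ρ h = ρ (h * g) := by
  ext v : 1
  rcases v with ⟨i, x⟩
  simp [ρ, Equiv.Perm.mul_apply, mul_assoc]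

lemma ρ_P (g h : QuaternionGroup 2) : ρ g * P θ b hom hb hq h = P θ b hom hb hq (h * g) := by
  ext v : 1
  rcases v with ⟨_ | _, x⟩ <;>
    simp [P_false, P_true, Equiv.Perm.mul_apply, mul_assoc]

lemma P_ρ (h g : QuaternionGroup 2) : P θ b hom hb hq h * ρ g = P θ b hom hb hq (θ g * h) := by
  ext v : 1
  rcases v with ⟨_ | _, x⟩ <;>
    simp [P_false, P_true, Equiv.Perm.mul_apply, hom, mul_assoc]

lemma P_P (h g : QuaternionGroup 2) :
    P θ b hom hb hq h * P θ b hom hb hq g = ρ (b * θ g * h) := by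
  ext v : 1
  rcases v with ⟨_ | _, x⟩ <;>
    simp only [P_false, P_true, Equiv.Perm.mul_apply, ρ_apply, hom, hq, hb] <;>
    · refine Prod.ext rfl ?_
      group

lemma ρ_one : ρ 1 = 1 := by
  ext v : 1
  rcases v with ⟨i, x⟩
  simp [ρ]

/-- The candidate regular subgroup. -/
def G : Subgroup (Equiv.Perm (Bool × Q)) where
  carrier := {π | (∃ g, π = ρ g) ∨ (∃ h, π = P θ b hom hb hq h)}
  one_mem' := Or.inl ⟨1, (ρ_one).symm⟩
  mul_mem' := by
    rintro π₁ π₂ (⟨g, rfl⟩ | ⟨h, rfl⟩) (⟨g', rfl⟩ | ⟨h', rfl⟩)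
    · exact Or.inl ⟨g' * g, (ρ_mul g g').symm ▸ rfl⟩
    · exact Or.inr ⟨h' * g, (ρ_P θ b hom hb hq g h').symm ▸ rfl⟩
    · exact Or.inr ⟨θ g' * h, (P_ρ θ b hom hb hq h g').symm ▸ rfl⟩
    · exact Or.inl ⟨b * θ h' * h, (P_P θ b hom hb hq h h').symm ▸ rfl⟩
  inv_mem' := by
    rintro π (⟨g, rfl⟩ | ⟨h, rfl⟩)
    · refine Or.inl ⟨g⁻¹, inv_eq_of_mul_eq_one_right ?_⟩
      rw [ρ_mul, inv_mul_cancel, ρ_one]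
    · refine Or.inr ⟨θ (h⁻¹ * b⁻¹), inv_eq_of_mul_eq_one_right ?_⟩
      rw [P_P]
      have : b * θ (θ (h⁻¹ * b⁻¹)) * h = 1 := by
        rw [hq]
        group
      rw [this, ρ_one]

variable (S : Set Q) (hS : ∀ u, u ∈ S ↔ θ u⁻¹ * b⁻¹ ∈ S)

include hom hS in
lemma key (h x y : QuaternionGroup 2) : θ x * h * (b * θ y * h)⁻¹ ∈ S ↔ y * x⁻¹ ∈ S := by
  have h1 : θ ((y * x⁻¹)⁻¹) * b⁻¹ = θ x * h * (b * θ y * h)⁻¹ := by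
    rw [show (y * x⁻¹)⁻¹ = x * y⁻¹ by group, hom, θ_inv θ hom]
    group
  rw [← h1]
  exact (hS (y * x⁻¹)).symm

include hom hb hq hS in
theorem good_case : IsCayleyGraph (haarGraph S) := by
  refine ⟨G θ b hom hb hq, ?_, ?_⟩
  · -- adjacency preservation
    rintro π (⟨g, rfl⟩ | ⟨h, rfl⟩) ⟨iu, x⟩ ⟨iv, y⟩
    · constructor
      · rintro (⟨h1, h2, h3⟩ | ⟨h1, h2, h3⟩)
        · refine Or.inl ⟨h1, h2, ?_⟩
          simpa [mul_inv_rev, mul_assoc] using h3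
        · refine Or.inr ⟨h1, h2, ?_⟩
          simpa [mul_inv_rev, mul_assoc] using h3
      · rintro (⟨h1, h2, h3⟩ | ⟨h1, h2, h3⟩)
        · refine Or.inl ⟨h1, h2, ?_⟩
          simpa [mul_inv_rev, mul_assoc] using h3
        · refine Or.inr ⟨h1, h2, ?_⟩
          simpa [mul_inv_rev, mul_assoc] using h3
    · rcases iu <;> rcases iv
      · -- false false
        simp [haarGraph, P_false]
      · -- false true
        rw [P_false, P_true]
        show ((true = false ∧ false = true ∧ (b * θ y * h) * (θ x * h)⁻¹ ∈ S) ∨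
              (true = true ∧ false = false ∧ (θ x * h) * (b * θ y * h)⁻¹ ∈ S)) ↔
            ((false = false ∧ true = true ∧ y * x⁻¹ ∈ S) ∨
              (false = true ∧ true = false ∧ x * y⁻¹ ∈ S))
        constructor
        · rintro (⟨h0, -⟩ | ⟨-, -, h3⟩)
          · exact absurd h0 (by simp)
          · exact Or.inl ⟨rfl, rfl, (key θ b hom S hS h x y).1 h3⟩
        · rintro (⟨-, -, h3⟩ | ⟨h0, -⟩)
          · exact Or.inr ⟨rfl, rfl, (key θ b hom S hS h x y).2 h3⟩
          · exact absurd h0 (by simp)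
      · -- true false
        rw [P_true, P_false]
        show ((false = false ∧ true = true ∧ (θ y * h) * (b * θ x * h)⁻¹ ∈ S) ∨
              (false = true ∧ true = false ∧ (b * θ x * h) * (θ y * h)⁻¹ ∈ S)) ↔
            ((true = false ∧ false = true ∧ y * x⁻¹ ∈ S) ∨
              (true = true ∧ false = false ∧ x * y⁻¹ ∈ S))
        constructor
        · rintro (⟨-, -, h3⟩ | ⟨h0, -⟩)
          · exact Or.inr ⟨rfl, rfl, (key θ b hom S hS h y x).1 h3⟩
          · exact absurd h0 (by simp)
        · rintro (⟨h0, -⟩ | ⟨-, -, h3⟩)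
          · exact absurd h0 (by simp)
          · exact Or.inl ⟨rfl, rfl, (key θ b hom S hS h y x).2 h3⟩
      · -- true true
        simp [haarGraph, P_true]
  · -- regularity
    rintro ⟨iu, x⟩ ⟨iv, y⟩
    rcases iu <;> rcases iv
    · -- false false : use ρ (x⁻¹ * y)
      refine ⟨ρ (x⁻¹ * y), ⟨Or.inl ⟨_, rfl⟩, by simp⟩, ?_⟩
      rintro π ⟨(⟨g, rfl⟩ | ⟨h, rfl⟩), heq⟩
      · simp only [ρ_apply, Prod.mk.injEq] at heq
        obtain ⟨-, h2⟩ := heq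
        congr 1
        rw [← h2]; group
      · rw [P_false] at heq
        simp at heq
    · -- false true : use P ((θ x)⁻¹ * y)
      refine ⟨P θ b hom hb hq ((θ x)⁻¹ * y), ⟨Or.inr ⟨_, rfl⟩, ?_⟩, ?_⟩
      · rw [P_false]; simp
      rintro π ⟨(⟨g, rfl⟩ | ⟨h, rfl⟩), heq⟩
      · simp only [ρ_apply, Prod.mk.injEq] at heq
        exact absurd heq.1 (by simp)
      · rw [P_false] at heq
        simp only [Prod.mk.injEq, true_and] at heq
        congr 1
        rw [← heq]; group
    · -- true false : use P ((θ x)⁻¹ * (b⁻¹ * y))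
      refine ⟨P θ b hom hb hq ((θ x)⁻¹ * (b⁻¹ * y)), ⟨Or.inr ⟨_, rfl⟩, ?_⟩, ?_⟩
      · rw [P_true]
        refine Prod.ext rfl ?_
        show b * θ x * ((θ x)⁻¹ * (b⁻¹ * y)) = y
        group
      rintro π ⟨(⟨g, rfl⟩ | ⟨h, rfl⟩), heq⟩
      · simp only [ρ_apply, Prod.mk.injEq] at heq
        exact absurd heq.1 (by simp)
      · rw [P_true] at heq
        simp only [Prod.mk.injEq, true_and] at heq
        congr 1
        rw [← heq]; group
    · -- true true : use ρ (x⁻¹ * y)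
      refine ⟨ρ (x⁻¹ * y), ⟨Or.inl ⟨_, rfl⟩, by simp⟩, ?_⟩
      rintro π ⟨(⟨g, rfl⟩ | ⟨h, rfl⟩), heq⟩
      · simp only [ρ_apply, Prod.mk.injEq] at heq
        obtain ⟨-, h2⟩ := heq
        congr 1
        rw [← h2]; group
      · rw [P_true] at heq
        simp at heq

end Good

lemma hS_swap {S : Set Q} (φ : Q → Q) (p q : QuaternionGroup 2)
    (hp : φ p = q) (hqq : φ q = p) (hfix : ∀ u, u ≠ p → u ≠ q → φ u = u)
    (h : p ∈ S ↔ q ∈ S) : ∀ u, u ∈ S ↔ φ u ∈ S := by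
  intro u
  by_cases h1 : u = p
  · subst h1; rw [hp]; exact h
  by_cases h2 : u = q
  · subst h2; rw [hqq]; exact h.symm
  · rw [hfix u h1 h2]

lemma hS_swap2 {S : Set Q} (φ : Q → Q) (p q r s : QuaternionGroup 2)
    (hp : φ p = q) (hqq : φ q = p) (hr : φ r = s) (hss : φ s = r)
    (hfix : ∀ u, u ≠ p → u ≠ q → u ≠ r → u ≠ s → φ u = u)
    (h1 : p ∈ S ↔ q ∈ S) (h2 : r ∈ S ↔ s ∈ S) : ∀ u, u ∈ S ↔ φ u ∈ S := by
  intro u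
  by_cases e1 : u = p
  · subst e1; rw [hp]; exact h1
  by_cases e2 : u = q
  · subst e2; rw [hqq]; exact h1.symm
  by_cases e3 : u = r
  · subst e3; rw [hr]; exact h2
  by_cases e4 : u = s
  · subst e4; rw [hss]; exact h2.symm
  · rw [hfix u e1 e2 e3 e4]

/-- The outer automorphism used when `S` links `i` and `j` with equal signs. -/
def th5 : Q → Q
  | .a i => if i = 1 then .xa 2 else if i = 3 then .xa 0 else .a i
  | .xa i => if i = 0 then .a 3 else if i = 2 then .a 1 else .xa (i + 2)

/-- The outer automorphism used when `S` links `i` and `j` with opposite signs. -/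
def th6 : Q → Q
  | .a i => if i = 1 then .xa 0 else if i = 3 then .xa 2 else .a i
  | .xa i => if i = 0 then .a 1 else if i = 2 then .a 3 else .xa (i + 2)

end QuatHaarAux

theorem quaternion_haar_graphs_are_cayley
    (S : Set (QuaternionGroup 2)) :
    IsCayleyGraph (haarGraph S) := by
  classical
  by_cases h1 : ((QuaternionGroup.a 0 : QuaternionGroup 2) ∈ S ↔ (QuaternionGroup.a 2 : QuaternionGroup 2) ∈ S)
  · exact QuatHaarAux.good_case id (.a 2) (fun _ _ => rfl) (by decide) (by decide) S
      (QuatHaarAux.hS_swap _ (.a 0) (.a 2) (by decide) (by decide) (by decide) h1)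
  by_cases h2 : ((QuaternionGroup.a 1 : QuaternionGroup 2) ∈ S ↔ (QuaternionGroup.a 3 : QuaternionGroup 2) ∈ S)
  · exact QuatHaarAux.good_case (fun x => QuaternionGroup.a 1 * x * (QuaternionGroup.a 1)⁻¹) 1 (by decide) (by decide) (by decide) S
      (QuatHaarAux.hS_swap _ (.a 1) (.a 3) (by decide) (by decide) (by decide) h2)
  by_cases h3 : ((QuaternionGroup.xa 0 : QuaternionGroup 2) ∈ S ↔ (QuaternionGroup.xa 2 : QuaternionGroup 2) ∈ S)
  · exact QuatHaarAux.good_case (fun x => QuaternionGroup.xa 0 * x * (QuaternionGroup.xa 0)⁻¹) 1 (by decide) (by decide) (by decide) S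
      (QuatHaarAux.hS_swap _ (.xa 0) (.xa 2) (by decide) (by decide) (by decide) h3)
  by_cases h4 : ((QuaternionGroup.xa 1 : QuaternionGroup 2) ∈ S ↔ (QuaternionGroup.xa 3 : QuaternionGroup 2) ∈ S)
  · exact QuatHaarAux.good_case (fun x => QuaternionGroup.xa 1 * x * (QuaternionGroup.xa 1)⁻¹) 1 (by decide) (by decide) (by decide) S
      (QuatHaarAux.hS_swap _ (.xa 1) (.xa 3) (by decide) (by decide) (by decide) h4)
  by_cases h5 : ((QuaternionGroup.a 1 : QuaternionGroup 2) ∈ S ↔ (QuaternionGroup.xa 0 : QuaternionGroup 2) ∈ S)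
  · exact QuatHaarAux.good_case QuatHaarAux.th5 1 (by decide) (by decide) (by decide) S
      (QuatHaarAux.hS_swap2 _ (.a 1) (.xa 0) (.a 3) (.xa 2) (by decide) (by decide) (by decide)
        (by decide) (by decide) h5 (by tauto))
  · exact QuatHaarAux.good_case QuatHaarAux.th6 1 (by decide) (by decide) (by decide) S
      (QuatHaarAux.hS_swap2 _ (.a 1) (.xa 2) (.a 3) (.xa 0) (by decide) (by decide) (by decide)
        (by decide) (by decide) (by tauto) (by tauto))
end
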